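/- arXiv:math/0207051 — 4 statements merged into one kernel-verified Lean document; each statement's English description precedes it below -/
import Mathlib

section
/- If f, g ∈ L¹(ℝ) are nonnegative and have the same 3-deck (almost everywhere), then ĝ(0) = f̂(0) and |ĝ(ξ)| = |f̂(ξ)| for all ξ ∈ ℝ. -/
open MeasureTheory Complex
open scoped FourierTransform Real

noncomputable def eC (ξ x : ℝ) : ℂ := Complex.exp (((-2) * π * x * ξ : ℝ) * Complex.I)

lemma eC_norm (ξ x : ℝ) : ‖eC ξ x‖ = 1 := by
  rw [eC, Complex.norm_exp_ofReal_mul_I]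

lemma continuous_eC (ξ : ℝ) : Continuous fun x => eC ξ x := by
  unfold eC; fun_prop

lemma eC_add (ξ x y : ℝ) : eC ξ (x + y) = eC ξ x * eC ξ y := by
  rw [eC, eC, eC, ← Complex.exp_add]; congr 1; push_cast; ring

lemma eC_cancel (ξ s : ℝ) : eC ξ s * eC (-ξ) s = 1 := by
  rw [eC, eC, ← Complex.exp_add, ← Complex.exp_zero]; congr 1; push_cast; ring

lemma eC_conj (ξ x : ℝ) : (starRingEnd ℂ) (eC ξ x) = eC (-ξ) x := by
  simp only [eC, ← Complex.exp_conj, map_mul, Complex.conj_ofReal, Complex.conj_I]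
  congr 1; push_cast; ring

lemma mpPsi' : MeasurePreserving
    (fun z : (ℝ × ℝ) × ℝ => (z.2, (z.1.1 + z.2, z.1.2 + z.2)))
    (((volume : Measure ℝ).prod (volume : Measure ℝ)).prod (volume : Measure ℝ))
    ((volume : Measure ℝ).prod ((volume : Measure ℝ).prod volume)) := by
  have h1 : MeasurePreserving (Prod.swap : (ℝ × ℝ) × ℝ → ℝ × (ℝ × ℝ))
      (((volume : Measure ℝ).prod volume).prod volume)
      ((volume : Measure ℝ).prod ((volume : Measure ℝ).prod volume)) :=
    Measure.measurePreserving_swap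
  have h2 : MeasurePreserving
      (fun q : ℝ × (ℝ × ℝ) => (q.1, (q.2.1 + q.1, q.2.2 + q.1)))
      ((volume : Measure ℝ).prod ((volume : Measure ℝ).prod volume))
      ((volume : Measure ℝ).prod ((volume : Measure ℝ).prod volume)) := by
    refine (MeasurePreserving.id _).skew_product (g := fun (a : ℝ) (c : ℝ × ℝ) => (c.1 + a, c.2 + a)) ?_ ?_
    · fun_prop
    · refine Filter.Eventually.of_forall fun a => ?_
      exact ((measurePreserving_add_right volume a).prod
        (measurePreserving_add_right volume a)).map_eq
  exact h2.comp h1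

lemma base_int (f : ℝ → ℝ) (hf : Integrable f) :
    Integrable (fun z : (ℝ × ℝ) × ℝ => f z.2 * (f (z.2 + z.1.1) * f (z.2 + z.1.2)))
      (((volume : Measure ℝ).prod volume).prod volume) := by
  have hK : Integrable (fun q : ℝ × (ℝ × ℝ) => f q.1 * (f q.2.1 * f q.2.2))
      ((volume : Measure ℝ).prod ((volume : Measure ℝ).prod volume)) :=
    hf.mul_prod (hf.mul_prod hf)
  have h := (mpPsi'.integrable_comp hK.aestronglyMeasurable).mpr hK
  refine h.congr (Filter.Eventually.of_forall fun z => ?_)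
  simp only [Function.comp]
  ring_nf

lemma H_int (f : ℝ → ℝ) (hf : Integrable f) (ξ : ℝ) :
    Integrable (fun z : (ℝ × ℝ) × ℝ =>
        ((f z.2 * f (z.2 + z.1.1) * f (z.2 + z.1.2) : ℝ) : ℂ) * (eC ξ z.1.1 * eC (-ξ) z.1.2))
      (((volume : Measure ℝ).prod volume).prod volume) := by
  have hb : Integrable (fun z : (ℝ × ℝ) × ℝ =>
      ((f z.2 * (f (z.2 + z.1.1) * f (z.2 + z.1.2)) : ℝ) : ℂ))
      (((volume : Measure ℝ).prod volume).prod volume) := (base_int f hf).ofReal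
  have h := hb.bdd_mul (f := fun z : (ℝ × ℝ) × ℝ => eC ξ z.1.1 * eC (-ξ) z.1.2)
      ((((continuous_eC ξ).comp (continuous_fst.comp continuous_fst)).mul
        ((continuous_eC (-ξ)).comp (continuous_snd.comp continuous_fst))).aestronglyMeasurable)
      (c := 1) (.of_forall fun z => by rw [norm_mul, eC_norm, eC_norm, mul_one])
  refine h.congr (Filter.Eventually.of_forall fun z => ?_)
  push_cast
  ring

lemma key (f : ℝ → ℝ) (hf : Integrable f) (ξ : ℝ) :
    ∫ p : ℝ × ℝ, Complex.ofReal (∫ t : ℝ, f t * f (t + p.1) * f (t + p.2)) *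
        (eC ξ p.1 * eC (-ξ) p.2)
      = 𝓕 (fun t => (f t : ℂ)) 0 *
        (𝓕 (fun t => (f t : ℂ)) ξ * 𝓕 (fun t => (f t : ℂ)) (-ξ)) := by
  set F : ℝ → ℂ := fun t => (f t : ℂ) with hF
  have four : ∀ η : ℝ, ∫ v : ℝ, F v * eC η v = 𝓕 F η := by
    intro η
    rw [Real.fourier_real_eq_integral_exp_smul]
    refine integral_congr_ae (.of_forall fun v => ?_)
    simp only [smul_eq_mul, eC]
    exact mul_comm _ _
  have f0 : 𝓕 F 0 = ∫ v : ℝ, F v := by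
    rw [← four 0]
    refine integral_congr_ae (.of_forall fun v => ?_)
    simp [eC]
  have sub1 : ∀ (t η : ℝ), (∫ x : ℝ, F (t + x) * eC η x) = 𝓕 F η * eC η (-t) := by
    intro t η
    have e1 : ∀ x : ℝ, F (t + x) * eC η x
        = (fun v => F v * (eC η v * eC η (-t))) (x + t) := by
      intro x
      simp only
      rw [← eC_add]
      have h2 : x + t + -t = x := by ring
      rw [h2, add_comm t x]
    calc ∫ x : ℝ, F (t + x) * eC η x
        = ∫ x : ℝ, (fun v => F v * (eC η v * eC η (-t))) (x + t) :=
          integral_congr_ae (.of_forall e1)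
      _ = ∫ v : ℝ, F v * (eC η v * eC η (-t)) :=
          integral_add_right_eq_self (μ := volume) (fun v => F v * (eC η v * eC η (-t))) t
      _ = (∫ v : ℝ, F v * eC η v) * eC η (-t) := by
          simp_rw [← mul_assoc]; exact integral_mul_const _ _
      _ = 𝓕 F η * eC η (-t) := by rw [four η]
  have hH : Integrable (Function.uncurry fun (p : ℝ × ℝ) (t : ℝ) =>
      F t * F (t + p.1) * F (t + p.2) * (eC ξ p.1 * eC (-ξ) p.2))
      (((volume : Measure ℝ).prod volume).prod volume) := by
    refine (H_int f hf ξ).congr (.of_forall fun z => ?_)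
    simp only [Function.uncurry, hF]
    push_cast
    ring
  rw [Measure.volume_eq_prod]
  calc ∫ p : ℝ × ℝ, Complex.ofReal (∫ t : ℝ, f t * f (t + p.1) * f (t + p.2)) *
          (eC ξ p.1 * eC (-ξ) p.2) ∂((volume : Measure ℝ).prod volume)
      = ∫ p : ℝ × ℝ, (∫ t : ℝ, F t * F (t + p.1) * F (t + p.2) * (eC ξ p.1 * eC (-ξ) p.2))
          ∂((volume : Measure ℝ).prod volume) := by
        refine integral_congr_ae (.of_forall fun p => ?_)
        beta_reduce
        have h1 : Complex.ofReal (∫ t : ℝ, f t * f (t + p.1) * f (t + p.2))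
            = ∫ t : ℝ, F t * F (t + p.1) * F (t + p.2) := by
          have h2 : ∀ t : ℝ, F t * F (t + p.1) * F (t + p.2)
              = ((f t * f (t + p.1) * f (t + p.2) : ℝ) : ℂ) := fun t => by
            simp only [hF]; push_cast; ring
          rw [integral_congr_ae (.of_forall h2)]
          exact (integral_ofReal (𝕜 := ℂ)).symm
        rw [h1]
        exact (integral_mul_const _ _).symm
    _ = ∫ t : ℝ, ∫ p : ℝ × ℝ, F t * F (t + p.1) * F (t + p.2) * (eC ξ p.1 * eC (-ξ) p.2)
          ∂((volume : Measure ℝ).prod volume) := integral_integral_swap hH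
    _ = ∫ t : ℝ, (𝓕 F ξ * eC ξ (-t)) * (𝓕 F (-ξ) * eC (-ξ) (-t)) * F t := by
        refine integral_congr_ae (.of_forall fun t => ?_)
        beta_reduce
        have h3 : (fun p : ℝ × ℝ => F t * F (t + p.1) * F (t + p.2) *
            (eC ξ p.1 * eC (-ξ) p.2))
            = fun p => ((F (t + p.1) * eC ξ p.1) * (F (t + p.2) * eC (-ξ) p.2)) * F t := by
          funext p; ring
        rw [h3, integral_mul_const,
          integral_prod_mul (fun x => F (t + x) * eC ξ x) (fun y => F (t + y) * eC (-ξ) y),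
          sub1 t ξ, sub1 t (-ξ)]
    _ = ∫ t : ℝ, (𝓕 F ξ * 𝓕 F (-ξ)) * F t := by
        refine integral_congr_ae (.of_forall fun t => ?_)
        beta_reduce
        calc (𝓕 F ξ * eC ξ (-t)) * (𝓕 F (-ξ) * eC (-ξ) (-t)) * F t
            = (𝓕 F ξ * 𝓕 F (-ξ)) * F t * (eC ξ (-t) * eC (-ξ) (-t)) := by ring
          _ = (𝓕 F ξ * 𝓕 F (-ξ)) * F t := by rw [eC_cancel, mul_one]
    _ = (𝓕 F ξ * 𝓕 F (-ξ)) * ∫ t : ℝ, F t := integral_const_mul _ _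
    _ = 𝓕 F 0 * (𝓕 F ξ * 𝓕 F (-ξ)) := by rw [f0]; ring

lemma four_neg (f : ℝ → ℝ) (ξ : ℝ) :
    𝓕 (fun t => (f t : ℂ)) (-ξ) = (starRingEnd ℂ) (𝓕 (fun t => (f t : ℂ)) ξ) := by
  rw [Real.fourier_real_eq_integral_exp_smul,
    Real.fourier_real_eq_integral_exp_smul, ← integral_conj]
  refine integral_congr_ae (.of_forall fun v => ?_)
  simp only [smul_eq_mul, map_mul, Complex.conj_ofReal]
  rw [← Complex.exp_conj]
  congr 1
  simp only [map_mul, Complex.conj_ofReal, Complex.conj_I]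
  push_cast; ring

/-- if `f, g ∈ L¹(ℝ)` are nonnegative and have the same 3-deck a.e.,
then `ĝ(0) = f̂(0)` and `|ĝ(ξ)| = |f̂(ξ)|` for all `ξ`. -/
theorem same_3deck_same_modulus (f g : ℝ → ℝ)
    (hf : Integrable f) (hg : Integrable g)
    (hf0 : ∀ t, 0 ≤ f t) (hg0 : ∀ t, 0 ≤ g t)
    (hN : ∀ᵐ p : ℝ × ℝ,
      (∫ t : ℝ, f t * f (t + p.1) * f (t + p.2)) =
      (∫ t : ℝ, g t * g (t + p.1) * g (t + p.2))) :
    𝓕 (fun t => (g t : ℂ)) 0 = 𝓕 (fun t => (f t : ℂ)) 0 ∧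
    ∀ ξ : ℝ, ‖𝓕 (fun t => (g t : ℂ)) ξ‖ = ‖𝓕 (fun t => (f t : ℂ)) ξ‖ := by
  have hEq : ∀ ξ : ℝ,
      𝓕 (fun t => (f t : ℂ)) 0 * (𝓕 (fun t => (f t : ℂ)) ξ * 𝓕 (fun t => (f t : ℂ)) (-ξ))
      = 𝓕 (fun t => (g t : ℂ)) 0 *
        (𝓕 (fun t => (g t : ℂ)) ξ * 𝓕 (fun t => (g t : ℂ)) (-ξ)) := by
    intro ξ
    rw [← key f hf ξ, ← key g hg ξ]
    refine integral_congr_ae ?_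
    filter_upwards [hN] with p hp
    rw [hp]
  have f0 : ∀ h : ℝ → ℝ, 𝓕 (fun t => (h t : ℂ)) 0 = Complex.ofReal (∫ t, h t) := by
    intro h
    rw [Real.fourier_real_eq_integral_exp_smul]
    simp only [mul_zero, zero_mul, Complex.ofReal_zero, Complex.exp_zero, one_smul]
    exact integral_ofReal (𝕜 := ℂ)
  have hmod : ∀ (h : ℝ → ℝ) (ξ : ℝ),
      𝓕 (fun t => (h t : ℂ)) ξ * 𝓕 (fun t => (h t : ℂ)) (-ξ)
      = Complex.ofReal (‖𝓕 (fun t => (h t : ℂ)) ξ‖ ^ 2) := by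
    intro h ξ
    rw [four_neg, Complex.mul_conj, Complex.normSq_eq_norm_sq]
  have hReal : ∀ ξ : ℝ, (∫ t, f t) * ‖𝓕 (fun t => (f t : ℂ)) ξ‖ ^ 2
      = (∫ t, g t) * ‖𝓕 (fun t => (g t : ℂ)) ξ‖ ^ 2 := by
    intro ξ
    have h1 := hEq ξ
    rw [f0 f, f0 g, hmod f ξ, hmod g ξ, ← Complex.ofReal_mul, ← Complex.ofReal_mul] at h1
    exact_mod_cast h1
  have hif : 0 ≤ ∫ t, f t := integral_nonneg hf0
  have hig : 0 ≤ ∫ t, g t := integral_nonneg hg0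
  have hnf0 : ‖𝓕 (fun t => (f t : ℂ)) 0‖ = ∫ t, f t := by
    rw [f0 f]; simp [Complex.norm_real, Real.norm_eq_abs, _root_.abs_of_nonneg hif]
  have hng0 : ‖𝓕 (fun t => (g t : ℂ)) 0‖ = ∫ t, g t := by
    rw [f0 g]; simp [Complex.norm_real, Real.norm_eq_abs, _root_.abs_of_nonneg hig]
  have hcube : (∫ t, f t) ^ 3 = (∫ t, g t) ^ 3 := by
    have h1 := hReal 0
    rw [hnf0, hng0] at h1
    nlinarith [h1]
  have hmass : (∫ t, f t) = ∫ t, g t :=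
    (pow_left_strictMonoOn₀ (three_ne_zero)).injOn hif hig hcube
  refine ⟨by rw [f0 f, f0 g, hmass], fun ξ => ?_⟩
  rcases eq_or_lt_of_le hif with h0 | hpos
  · have hf' : f =ᵐ[volume] 0 := (integral_eq_zero_iff_of_nonneg hf0 hf).mp h0.symm
    have hg' : g =ᵐ[volume] 0 := (integral_eq_zero_iff_of_nonneg hg0 hg).mp
      (by rw [← hmass]; exact h0.symm)
    have zf : 𝓕 (fun t => (f t : ℂ)) ξ = 0 := by
      rw [Real.fourier_real_eq_integral_exp_smul]
      apply integral_eq_zero_of_ae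
      filter_upwards [hf'] with t ht
      simp [ht]
    have zg : 𝓕 (fun t => (g t : ℂ)) ξ = 0 := by
      rw [Real.fourier_real_eq_integral_exp_smul]
      apply integral_eq_zero_of_ae
      filter_upwards [hg'] with t ht
      simp [ht]
    rw [zf, zg]
  · have h2 : ‖𝓕 (fun t => (g t : ℂ)) ξ‖ ^ 2 = ‖𝓕 (fun t => (f t : ℂ)) ξ‖ ^ 2 := by
      have h1 := hReal ξ
      rw [← hmass] at h1
      exact (mul_left_cancel₀ (ne_of_gt hpos) h1).symm
    exact (pow_left_strictMonoOn₀ two_ne_zero).injOn (norm_nonneg _) (norm_nonneg _) h2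
end

section
/- Let E ⊂ ℝ be a measurable set of finite measure, f = χ_E, and let g ∈ L¹(ℝ) be nonnegative with the same 3-deck as f (N_g = N_f a.e.). Then there exists a measurable set F of finite measure such that g = χ_F almost everywhere. -/
open MeasureTheory Filter Set
open scoped ENNReal Topology NNReal symmDiff


/- Translation continuity for sets -/
private theorem deck_tendsto_sdiff (E : Set ℝ) (hE : MeasurableSet E) (hfin : volume E ≠ ⊤) :
    Filter.Tendsto (fun x : ℝ => volume (E \ ((· + x) ⁻¹' E))) (𝓝 0) (𝓝 0) := by
  set T : C(ℝ × ℝ, ℝ) := ⟨fun p => p.2 + p.1, by continuity⟩ with hT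
  have hcur : ∀ x : ℝ, ⇑(T.curry x) = fun t => t + x := fun x => rfl
  have h0 : ((T.curry 0 : C(ℝ, ℝ)) ⁻¹' E) = E := by ext t; simp [hcur]
  have hmp : ∀ x : ℝ, MeasurePreserving (T.curry x) volume volume := by
    intro x; rw [hcur]; exact measurePreserving_add_right volume x
  have main := tendsto_measure_symmDiff_preimage_nhds_zero
    (f := fun x : ℝ => T.curry x) (g := T.curry 0) (s := E) (μ := volume) (ν := volume)
    (T.curry.continuous.tendsto 0) (Filter.Eventually.of_forall hmp) (hmp 0)
    hE.nullMeasurableSet hfin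
  rw [h0] at main
  have hb : ∀ x : ℝ, volume (E \ ((· + x) ⁻¹' E)) ≤ volume (((T.curry x) ⁻¹' E) ∆ E) := by
    intro x
    apply measure_mono
    rw [hcur]
    exact fun t ht => Or.inr ⟨ht.1, ht.2⟩
  exact tendsto_of_tendsto_of_tendsto_of_le_of_le tendsto_const_nhds main
    (fun x => zero_le) hb

section swaps
variable {H k : ℝ → ℝ≥0∞}

private lemma deck_measB (hH : Measurable H) (hk : Measurable k) :
    Measurable fun t => ∫⁻ x, H (t + x) * k x :=
  Measurable.lintegral_prod_right' (f := fun q : ℝ × ℝ => H (q.1 + q.2) * k q.2)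
    (by fun_prop)

private lemma deck_measI (hH : Measurable H) :
    Measurable fun p : ℝ × ℝ => ∫⁻ t, H t * H (t + p.1) * H (t + p.2) :=
  Measurable.lintegral_prod_right'
    (f := fun q : (ℝ × ℝ) × ℝ => H q.2 * H (q.2 + q.1.1) * H (q.2 + q.1.2)) (by fun_prop)

private theorem deck_swap2 (hH : Measurable H) (hk : Measurable k) :
    ∫⁻ x, (∫⁻ t, H t * H (t + x)) * k x
    = ∫⁻ t, H t * ∫⁻ x, H (t + x) * k x := by
  have h1 : ∀ x : ℝ, (∫⁻ t, H t * H (t + x)) * k x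
      = ∫⁻ t, (H t * (H (t + x) * k x)) := by
    intro x
    rw [← lintegral_mul_const _ (show Measurable fun t => H t * H (t + x) by fun_prop)]
    congr 1; funext t; ring
  simp_rw [h1]
  rw [lintegral_lintegral_swap]
  · congr 1; funext t
    rw [lintegral_const_mul _ (show Measurable fun x => H (t + x) * k x by fun_prop)]
  · exact Measurable.aemeasurable (by fun_prop)

private theorem deck_swap3 (hH : Measurable H) (hk : Measurable k) :
    ∫⁻ p : ℝ × ℝ, (∫⁻ t, H t * H (t + p.1) * H (t + p.2)) * (k p.1 * k p.2)
    = ∫⁻ t, H t * (∫⁻ x, H (t + x) * k x) * (∫⁻ x, H (t + x) * k x) := by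
  rw [Measure.volume_eq_prod, lintegral_prod
    (fun p : ℝ × ℝ => (∫⁻ t, H t * H (t + p.1) * H (t + p.2)) * (k p.1 * k p.2))
    (Measurable.aemeasurable ((deck_measI hH).mul
      (show Measurable fun p : ℝ × ℝ => k p.1 * k p.2 by fun_prop)))]
  have h1 : ∀ x y : ℝ, (∫⁻ t, H t * H (t + x) * H (t + y)) * (k x * k y)
      = ∫⁻ t, (H t * H (t + x) * k x) * (H (t + y) * k y) := by
    intro x y
    rw [← lintegral_mul_const _ (show Measurable fun t => H t * H (t + x) * H (t + y)
      by fun_prop)]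
    congr 1; funext t; ring
  simp_rw [h1]
  have h2 : ∀ x : ℝ, (∫⁻ y, ∫⁻ t, (H t * H (t + x) * k x) * (H (t + y) * k y))
      = ∫⁻ t, (H t * H (t + x) * k x) * ∫⁻ y, H (t + y) * k y := by
    intro x
    rw [lintegral_lintegral_swap]
    · congr 1; funext t
      rw [lintegral_const_mul _ (show Measurable fun y => H (t + y) * k y by fun_prop)]
    · exact Measurable.aemeasurable (by fun_prop)
  simp_rw [h2]
  have h3 : ∀ x t : ℝ, (H t * H (t + x) * k x) * (∫⁻ y, H (t + y) * k y)
      = (H t * (∫⁻ y, H (t + y) * k y)) * (H (t + x) * k x) := by intro x t; ring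
  simp_rw [h3]
  rw [lintegral_lintegral_swap]
  · congr 1; funext t
    rw [lintegral_const_mul _ (show Measurable fun x => H (t + x) * k x by fun_prop)]
  · apply Measurable.aemeasurable
    apply Measurable.mul
    · exact Measurable.mul (by fun_prop) ((deck_measB hH hk).comp measurable_snd)
    · fun_prop

private theorem deck_swapY (hH : Measurable H) (x : ℝ) :
    ∫⁻ y, (∫⁻ t, H t * H (t + x) * H (t + y))
      = (∫⁻ t, H t * H (t + x)) * ∫⁻ t, H t := by
  rw [lintegral_lintegral_swap]
  · have h1 : ∀ t : ℝ, (∫⁻ y, H t * H (t + x) * H (t + y))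
        = (H t * H (t + x)) * ∫⁻ t, H t := by
      intro t
      rw [lintegral_const_mul _ (by fun_prop), lintegral_add_left_eq_self H t]
    simp_rw [h1]
    rw [lintegral_mul_const _ (by fun_prop)]
  · exact Measurable.aemeasurable (by fun_prop)

end swaps

private lemma deck_two_mul_le (a b : ℝ≥0∞) : 2 * (a * b) ≤ a * a + b * b := by
  rcases eq_or_ne a ⊤ with ha | ha
  · rcases eq_or_ne b 0 with hb | hb
    · simp [hb]
    · have : a * a = ⊤ := by simp [ha]
      rw [this]; exact le_trans le_top (le_add_right le_rfl)
  rcases eq_or_ne b ⊤ with hb | hb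
  · rcases eq_or_ne a 0 with ha' | ha'
    · simp [ha']
    · have : b * b = ⊤ := by simp [hb]
      rw [this]; exact le_trans le_top (le_add_left le_rfl)
  lift a to ℝ≥0 using ha
  lift b to ℝ≥0 using hb
  have h : 2 * (a * b) ≤ a * a + b * b := by
    have := two_mul_le_add_sq a b
    calc 2 * (a * b) = 2 * a * b := by ring
    _ ≤ a ^ 2 + b ^ 2 := this
    _ = a * a + b * b := by ring
  calc (2 : ℝ≥0∞) * (a * b) = ((2 * (a * b) : ℝ≥0) : ℝ≥0∞) := by push_cast; ring
  _ ≤ ((a * a + b * b : ℝ≥0) : ℝ≥0∞) := by exact_mod_cast ENNReal.coe_le_coe.mpr h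
  _ = (a : ℝ≥0∞) * a + (b : ℝ≥0∞) * b := by push_cast; ring


noncomputable def dk (ε : ℝ) : ℝ → ℝ≥0∞ :=
  (Set.Icc (-ε) ε).indicator (fun _ => (ENNReal.ofReal (2*ε))⁻¹)

private lemma dk_meas (ε : ℝ) : Measurable (dk ε) :=
  measurable_const.indicator measurableSet_Icc

private lemma dk_int {ε : ℝ} (hε : 0 < ε) : ∫⁻ x, dk ε x = 1 := by
  rw [dk, lintegral_indicator measurableSet_Icc, setLIntegral_const, Real.volume_Icc]
  have h2 : ε - -ε = 2 * ε := by ring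
  rw [h2]
  exact ENNReal.inv_mul_cancel (by simp [hε, mul_pos]) ENNReal.ofReal_ne_top

private lemma deck_shift {H : ℝ → ℝ≥0∞} (hH : Measurable H) (t ε : ℝ) :
    ∫⁻ x in Icc (-ε) ε, H (t + x) = ∫⁻ s in Icc (t - ε) (t + ε), H s := by
  rw [← lintegral_indicator measurableSet_Icc, ← lintegral_indicator measurableSet_Icc]
  have h1 : ∀ x : ℝ, (Icc (-ε) ε).indicator (fun x => H (t + x)) x
      = (Icc (t - ε) (t + ε)).indicator H (t + x) := by
    intro x
    by_cases hx : x ∈ Icc (-ε) ε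
    · have hx2 : t + x ∈ Icc (t - ε) (t + ε) := by
        simp only [mem_Icc] at hx ⊢; constructor <;> linarith [hx.1, hx.2]
      rw [indicator_of_mem hx, indicator_of_mem hx2]
    · have hx2 : t + x ∉ Icc (t - ε) (t + ε) := by
        simp only [mem_Icc] at hx ⊢
        intro h; exact hx ⟨by linarith [h.1], by linarith [h.2]⟩
      rw [indicator_of_notMem hx, indicator_of_notMem hx2]
  simp_rw [h1]
  exact lintegral_add_left_eq_self ((Icc (t - ε) (t + ε)).indicator H) t

/-- the smoothed function equals an `ofReal` of a ball average -/
private lemma deck_conv_eq {g : ℝ → ℝ} (hgm : Measurable g) (hg : Integrable g)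
    (hg0 : ∀ t, 0 ≤ g t) {ε : ℝ} (hε : 0 < ε) (t : ℝ) :
    ∫⁻ x, ENNReal.ofReal (g (t + x)) * dk ε x
      = ENNReal.ofReal (⨍ y in Metric.closedBall t ε, g y) := by
  set G : ℝ → ℝ≥0∞ := fun s => ENNReal.ofReal (g s) with hG
  have hGm : Measurable G := ENNReal.measurable_ofReal.comp hgm
  have h1 : ∀ x : ℝ, G (t + x) * dk ε x
      = (Icc (-ε) ε).indicator (fun x => G (t + x) * (ENNReal.ofReal (2*ε))⁻¹) x := by
    intro x
    by_cases hx : x ∈ Icc (-ε) ε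
    · rw [indicator_of_mem hx]; rw [dk, indicator_of_mem hx]
    · rw [indicator_of_notMem hx, dk, indicator_of_notMem hx, mul_zero]
  rw [show (fun x => ENNReal.ofReal (g (t + x)) * dk ε x) = _ from funext h1]
  rw [lintegral_indicator measurableSet_Icc,
    lintegral_mul_const _ (show Measurable fun x => G (t + x) by fun_prop), deck_shift hGm t ε]
  rw [setAverage_eq, Real.closedBall_eq_Icc, measureReal_def, Real.volume_Icc]
  have h2 : t + ε - (t - ε) = 2 * ε := by ring
  rw [h2, smul_eq_mul, ENNReal.toReal_ofReal (by positivity)]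
  rw [ENNReal.ofReal_mul (p := (2*ε)⁻¹) (by positivity)]
  rw [ofReal_integral_eq_lintegral_ofReal (hg.integrableOn)
    (Eventually.of_forall fun y => hg0 y)]
  rw [ENNReal.ofReal_inv_of_pos (by positivity)]
  ring

private theorem deck_aux (E : Set ℝ) (hE : MeasurableSet E)
    (hEfin : volume E < ⊤) (g : ℝ → ℝ) (hgm : Measurable g) (hg : Integrable g)
    (hg0 : ∀ t, 0 ≤ g t)
    (hN : ∀ᵐ p : ℝ × ℝ,
      (∫ t : ℝ, E.indicator (fun _ => (1 : ℝ)) t *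
        E.indicator (fun _ => (1 : ℝ)) (t + p.1) *
        E.indicator (fun _ => (1 : ℝ)) (t + p.2)) =
      (∫ t : ℝ, g t * g (t + p.1) * g (t + p.2))) :
    ∃ F : Set ℝ, MeasurableSet F ∧ volume F < ⊤ ∧
      ∀ᵐ x : ℝ, g x = F.indicator (fun _ => (1 : ℝ)) x := by
  set f : ℝ → ℝ := E.indicator (fun _ => (1 : ℝ)) with hf
  set F : ℝ → ℝ≥0∞ := E.indicator (fun _ => (1 : ℝ≥0∞)) with hF
  set G : ℝ → ℝ≥0∞ := fun t => ENNReal.ofReal (g t) with hG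
  set M : ℝ≥0∞ := volume E with hM
  have hMne : M ≠ ⊤ := hEfin.ne
  have hFm : Measurable F := measurable_const.indicator hE
  have hGm : Measurable G := ENNReal.measurable_ofReal.comp hgm
  have hfm : Measurable f := measurable_const.indicator hE
  have hF1 : ∀ t, F t ≤ 1 := by
    intro t; by_cases ht : t ∈ E <;> simp [hF, Set.indicator_apply, ht]
  have hfnn : ∀ t, 0 ≤ f t := by
    intro t; by_cases ht : t ∈ E <;> simp [hf, Set.indicator_apply, ht]
  have hFof : ∀ t, ENNReal.ofReal (f t) = F t := by
    intro t; by_cases ht : t ∈ E <;> simp [hf, hF, Set.indicator_apply, ht]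
  have hFvol : ∫⁻ t, F t = M := lintegral_indicator_one hE
  have hGfin : ∀ t, G t ≠ ⊤ := fun t => ENNReal.ofReal_ne_top
  have hGvol : ∫⁻ t, G t ≠ ⊤ := by
    have h1 : ∫⁻ t, G t = ∫⁻ t, (‖g t‖₊ : ℝ≥0∞) :=
      lintegral_congr fun t => (Real.enorm_eq_ofReal (hg0 t)).symm
    rw [h1]
    exact hg.2.ne
  -- convert the hypothesis to lintegrals
  have hconvf : ∀ p : ℝ × ℝ, (∫ t : ℝ, f t * f (t + p.1) * f (t + p.2))
      = (∫⁻ t, F t * F (t + p.1) * F (t + p.2)).toReal := by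
    intro p
    rw [integral_eq_lintegral_of_nonneg_ae
      (Eventually.of_forall fun t =>
        mul_nonneg (mul_nonneg (hfnn t) (hfnn (t + p.1))) (hfnn (t + p.2)))
      (by fun_prop : Measurable fun t => f t * f (t + p.1) * f (t + p.2)).aestronglyMeasurable]
    congr 1
    apply lintegral_congr fun t => ?_
    rw [ENNReal.ofReal_mul (mul_nonneg (hfnn t) (hfnn (t + p.1))),
      ENNReal.ofReal_mul (hfnn t), hFof, hFof, hFof]
  have hconvg : ∀ p : ℝ × ℝ, (∫ t : ℝ, g t * g (t + p.1) * g (t + p.2))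
      = (∫⁻ t, G t * G (t + p.1) * G (t + p.2)).toReal := by
    intro p
    rw [integral_eq_lintegral_of_nonneg_ae
      (Eventually.of_forall fun t => by
        have := hg0 t; have := hg0 (t + p.1); have := hg0 (t + p.2); positivity)
      (by fun_prop : Measurable fun t => g t * g (t + p.1) * g (t + p.2)).aestronglyMeasurable]
    congr 1
    apply lintegral_congr fun t => ?_
    rw [ENNReal.ofReal_mul (by have := hg0 t; have := hg0 (t + p.1); positivity),
      ENNReal.ofReal_mul (hg0 t)]
  -- total masses
  have htriple : ∀ (H : ℝ → ℝ≥0∞), Measurable H →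
      ∫⁻ p : ℝ × ℝ, (∫⁻ t, H t * H (t + p.1) * H (t + p.2))
        = (∫⁻ t, H t) * (∫⁻ t, H t) * (∫⁻ t, H t) := by
    intro H hH
    have h0 := deck_swap3 (k := fun _ => (1 : ℝ≥0∞)) hH measurable_const
    simp only [mul_one] at h0
    rw [h0]
    have h1 : ∀ t : ℝ, ∫⁻ x, H (t + x) = ∫⁻ s, H s := fun t =>
      lintegral_add_left_eq_self H t
    simp_rw [h1]
    rw [lintegral_mul_const _ (hH.mul_const _),
      lintegral_mul_const _ hH]
  have hLf_le : ∀ p : ℝ × ℝ, (∫⁻ t, F t * F (t + p.1) * F (t + p.2)) ≤ M := by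
    intro p
    calc ∫⁻ t, F t * F (t + p.1) * F (t + p.2)
        ≤ ∫⁻ t, F t * 1 * 1 := lintegral_mono fun t =>
          mul_le_mul' (mul_le_mul' le_rfl (hF1 _)) (hF1 _)
      _ = M := by simp only [mul_one]; exact hFvol
  have hLgm : Measurable fun p : ℝ × ℝ => ∫⁻ t, G t * G (t + p.1) * G (t + p.2) :=
    deck_measI hGm
  have hLg_fin : ∀ᵐ p : ℝ × ℝ, (∫⁻ t, G t * G (t + p.1) * G (t + p.2)) < ⊤ := by
    apply ae_lt_top hLgm
    rw [htriple G hGm]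
    exact ENNReal.mul_ne_top (ENNReal.mul_ne_top hGvol hGvol) hGvol
  have hLL : ∀ᵐ p : ℝ × ℝ, (∫⁻ t, G t * G (t + p.1) * G (t + p.2))
      = (∫⁻ t, F t * F (t + p.1) * F (t + p.2)) := by
    filter_upwards [hN, hLg_fin] with p h1 h2
    rw [hconvf p, hconvg p] at h1
    exact ((ENNReal.toReal_eq_toReal_iff' ((hLf_le p).trans_lt hEfin).ne h2.ne).mp h1).symm
  -- step 1 : total mass of g is M
  have hI : ∫⁻ t, G t = M := by
    have hF3 : ∫⁻ p : ℝ × ℝ, (∫⁻ t, F t * F (t + p.1) * F (t + p.2)) = M * M * M := by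
      rw [htriple F hFm, hFvol]
    have h3 : (∫⁻ t, G t) * (∫⁻ t, G t) * (∫⁻ t, G t) = M * M * M := by
      rw [← htriple G hGm, ← hF3]
      exact lintegral_congr_ae hLL
    set I := ∫⁻ t, G t with hIdef
    rcases lt_trichotomy I M with h | h | h
    · exfalso
      have : I * I * I < M * M * M := by
        have h1 : I ^ 3 < M ^ 3 := ENNReal.pow_lt_pow_left (by norm_num) h
        calc I * I * I = I ^ 3 := by ring
          _ < M ^ 3 := h1
          _ = M * M * M := by ring
      exact this.ne h3
    · exact h
    · exfalso
      have : M * M * M < I * I * I := by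
        have h1 : M ^ 3 < I ^ 3 := ENNReal.pow_lt_pow_left (by norm_num) h
        calc M * M * M = M ^ 3 := by ring
          _ < I ^ 3 := h1
          _ = I * I * I := by ring
      exact this.ne h3.symm
  -- the degenerate case
  rcases eq_or_ne M 0 with hM0 | hM0
  · refine ⟨∅, MeasurableSet.empty, by simp, ?_⟩
    have hg00 : g =ᵐ[volume] 0 := by
      have h1 : ∫⁻ t, G t = 0 := by rw [hI, hM0]
      have h2 := (lintegral_eq_zero_iff hGm).mp h1
      filter_upwards [h2] with t ht
      have : ENNReal.ofReal (g t) = 0 := ht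
      have h3 := ENNReal.ofReal_eq_zero.mp this
      exact le_antisymm h3 (hg0 t)
    filter_upwards [hg00] with x hx
    simp [hx]
  -- main case : M ≠ 0
  have hCC : ∀ᵐ x : ℝ, (∫⁻ t, G t * G (t + x)) = (∫⁻ t, F t * F (t + x)) := by
    have h := hLL
    rw [Measure.volume_eq_prod] at h
    have h2 := Measure.ae_ae_of_ae_prod h
    filter_upwards [h2] with x hx
    have h3 : (∫⁻ y, ∫⁻ t, G t * G (t + x) * G (t + y))
        = ∫⁻ y, ∫⁻ t, F t * F (t + x) * F (t + y) := lintegral_congr_ae hx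
    rw [deck_swapY hGm x, deck_swapY hFm x, hFvol, hI] at h3
    exact (ENNReal.mul_left_inj hM0 hMne).mp h3
  have hCfM : ∀ x, (∫⁻ t, F t * F (t + x)) ≤ M := by
    intro x
    calc ∫⁻ t, F t * F (t + x) ≤ ∫⁻ t, F t * 1 :=
        lintegral_mono fun t => mul_le_mul' le_rfl (hF1 _)
      _ = M := by simp only [mul_one]; exact hFvol
  have hCf_eq : ∀ x, (∫⁻ t, F t * F (t + x)) = volume (E ∩ ((· + x) ⁻¹' E)) := by
    intro x
    have h1 : ∀ t, F t * F (t + x)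
        = (E ∩ ((· + x) ⁻¹' E)).indicator (fun _ => (1 : ℝ≥0∞)) t := by
      intro t
      by_cases h1 : t ∈ E <;> by_cases h2 : t + x ∈ E <;>
        simp [hF, Set.indicator_apply, h1, h2, Set.mem_preimage]
    simp_rw [h1]
    exact lintegral_indicator_one (hE.inter ((measurable_add_const x) hE))
  set Q : ℝ≥0∞ := ∫⁻ t, G t * G t with hQdef
  have hCgQ : ∀ x, (∫⁻ t, G t * G (t + x)) ≤ Q := by
    intro x
    have h2 : 2 * (∫⁻ t, G t * G (t + x)) ≤ 2 * Q := by
      calc 2 * (∫⁻ t, G t * G (t + x)) = ∫⁻ t, 2 * (G t * G (t + x)) :=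
          (lintegral_const_mul 2 (by fun_prop)).symm
        _ ≤ ∫⁻ t, (G t * G t + G (t + x) * G (t + x)) :=
          lintegral_mono fun t => deck_two_mul_le _ _
        _ = Q + ∫⁻ t, G (t + x) * G (t + x) := lintegral_add_left (by fun_prop) _
        _ = Q + Q := by
          congr 1
          exact lintegral_add_right_eq_self (fun s => G s * G s) x
        _ = 2 * Q := (two_mul Q).symm
    exact (ENNReal.mul_le_mul_iff_right (by norm_num) (by norm_num)).mp h2
  have hlow : M ≤ Q := by
    rcases eq_or_ne Q ⊤ with hQt | hQt
    · rw [hQt]; exact le_top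
    apply ENNReal.le_of_forall_pos_le_add
    intro ε hε _
    have hc : (0 : ℝ≥0∞) < ε := ENNReal.coe_pos.mpr hε
    have hev : ∀ᶠ x in 𝓝 (0 : ℝ), volume (E \ ((· + x) ⁻¹' E)) < ε :=
      (deck_tendsto_sdiff E hE hMne).eventually (gt_mem_nhds hc)
    obtain ⟨η, hη, hball⟩ := Metric.eventually_nhds_iff_ball.mp hev
    set Nbad : Set ℝ := {x : ℝ | ¬ (∫⁻ t, G t * G (t + x)) = (∫⁻ t, F t * F (t + x))}
      with hNbad
    have hN0 : volume Nbad = 0 := ae_iff.mp hCC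
    have hpos : volume ((Metric.ball (0 : ℝ) η) \ Nbad) ≠ 0 := by
      rw [measure_diff_null hN0, Real.volume_ball]
      exact ne_of_gt (ENNReal.ofReal_pos.mpr (by linarith))
    obtain ⟨x, hx⟩ := nonempty_of_measure_ne_zero hpos
    have hxb := hball x hx.1
    have hxe : (∫⁻ t, G t * G (t + x)) = (∫⁻ t, F t * F (t + x)) := not_not.mp hx.2
    calc M = volume (E ∩ ((· + x) ⁻¹' E)) + volume (E \ ((· + x) ⁻¹' E)) :=
        (measure_inter_add_diff E ((measurable_add_const x) hE)).symm
      _ ≤ (∫⁻ t, F t * F (t + x)) + ε :=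
        add_le_add (le_of_eq (hCf_eq x).symm) hxb.le
      _ = (∫⁻ t, G t * G (t + x)) + ε := by rw [hxe]
      _ ≤ Q + ε := add_le_add_left (hCgQ x) _
  -- upper bounds via approximate identities
  have hA_le_f : ∀ {ε : ℝ}, 0 < ε → ∀ t, (∫⁻ x, F (t + x) * dk ε x) ≤ 1 := by
    intro ε hε t
    calc ∫⁻ x, F (t + x) * dk ε x ≤ ∫⁻ x, 1 * dk ε x :=
        lintegral_mono fun x => mul_le_mul_left (hF1 _) _
      _ = 1 := by simp_rw [one_mul]; exact dk_int hε
  have hup2 : ∀ {ε : ℝ}, 0 < ε → ∫⁻ t, G t * (∫⁻ x, G (t + x) * dk ε x) ≤ M := by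
    intro ε hε
    rw [← deck_swap2 hGm (dk_meas ε)]
    have e2 : ∫⁻ x, (∫⁻ t, G t * G (t + x)) * dk ε x
        = ∫⁻ x, (∫⁻ t, F t * F (t + x)) * dk ε x :=
      lintegral_congr_ae (hCC.mono fun x hx => by dsimp only; rw [hx])
    rw [e2]
    calc ∫⁻ x, (∫⁻ t, F t * F (t + x)) * dk ε x ≤ ∫⁻ x, M * dk ε x :=
        lintegral_mono fun x => mul_le_mul_left (hCfM x) _
      _ = M := by rw [lintegral_const_mul _ (dk_meas ε), dk_int hε, mul_one]
  have hup3 : ∀ {ε : ℝ}, 0 < ε →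
      ∫⁻ t, G t * (∫⁻ x, G (t + x) * dk ε x) * (∫⁻ x, G (t + x) * dk ε x) ≤ M := by
    intro ε hε
    rw [← deck_swap3 hGm (dk_meas ε)]
    have e3 : ∫⁻ p : ℝ × ℝ, (∫⁻ t, G t * G (t + p.1) * G (t + p.2)) * (dk ε p.1 * dk ε p.2)
        = ∫⁻ p : ℝ × ℝ, (∫⁻ t, F t * F (t + p.1) * F (t + p.2)) * (dk ε p.1 * dk ε p.2) :=
      lintegral_congr_ae (hLL.mono fun p hp => by dsimp only; rw [hp])
    rw [e3, deck_swap3 hFm (dk_meas ε)]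
    calc ∫⁻ t, F t * (∫⁻ x, F (t + x) * dk ε x) * (∫⁻ x, F (t + x) * dk ε x)
        ≤ ∫⁻ t, F t * 1 * 1 := lintegral_mono fun t =>
          mul_le_mul' (mul_le_mul' le_rfl (hA_le_f hε t)) (hA_le_f hε t)
      _ = M := by simp only [mul_one]; exact hFvol
  -- Lebesgue differentiation
  set en : ℕ → ℝ := fun n => ((n : ℝ) + 1)⁻¹ with hen_def
  have hen : ∀ n, 0 < en n := fun n => by positivity
  have htendA : ∀ᵐ t : ℝ, Tendsto (fun n : ℕ => ∫⁻ x, G (t + x) * dk (en n) x)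
      atTop (𝓝 (G t)) := by
    have hlt := IsUnifLocDoublingMeasure.ae_tendsto_average volume (hg.locallyIntegrable) 1
    filter_upwards [hlt] with t ht
    have hδ : Tendsto en atTop (𝓝[>] 0) := by
      apply tendsto_nhdsWithin_of_tendsto_nhds_of_eventually_within
      · have h := tendsto_one_div_add_atTop_nhds_zero_nat (𝕜 := ℝ)
        simpa [hen_def, one_div] using h
      · exact Eventually.of_forall fun n => hen n
    have hmem : ∀ᶠ j in atTop, t ∈ Metric.closedBall t ((1 : ℝ) * en j) :=
      Eventually.of_forall fun j => by
        simp only [Metric.mem_closedBall, dist_self, one_mul]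
        exact (hen j).le
    have h2 := ht (fun _ => t) en hδ hmem
    have h3 := ENNReal.tendsto_ofReal h2
    exact h3.congr fun n => (deck_conv_eq hgm hg hg0 (hen n) t).symm
  have hQle : Q ≤ M := by
    have h1 : ∀ᵐ t : ℝ, G t * G t
        = liminf (fun n : ℕ => G t * (∫⁻ x, G (t + x) * dk (en n) x)) atTop := by
      filter_upwards [htendA] with t ht
      exact (ENNReal.Tendsto.mul tendsto_const_nhds (Or.inr (hGfin t)) ht
        (Or.inr (hGfin t))).liminf_eq.symm
    calc Q = ∫⁻ t, liminf (fun n : ℕ => G t * (∫⁻ x, G (t + x) * dk (en n) x)) atTop :=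
        lintegral_congr_ae h1
      _ ≤ liminf (fun n : ℕ => ∫⁻ t, G t * (∫⁻ x, G (t + x) * dk (en n) x)) atTop :=
        lintegral_liminf_le fun n => hGm.mul (deck_measB hGm (dk_meas _))
      _ ≤ M := le_trans (liminf_le_liminf (Eventually.of_forall fun n => hup2 (hen n)))
        (by simp [liminf_const])
  have hcube : ∫⁻ t, G t * G t * G t ≤ M := by
    have h1 : ∀ᵐ t : ℝ, G t * G t * G t
        = liminf (fun n : ℕ => G t * (∫⁻ x, G (t + x) * dk (en n) x)
            * (∫⁻ x, G (t + x) * dk (en n) x)) atTop := by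
      filter_upwards [htendA] with t ht
      have h2 : Tendsto (fun n : ℕ => G t * (∫⁻ x, G (t + x) * dk (en n) x))
          atTop (𝓝 (G t * G t)) :=
        ENNReal.Tendsto.mul tendsto_const_nhds (Or.inr (hGfin t)) ht (Or.inr (hGfin t))
      exact (ENNReal.Tendsto.mul h2 (Or.inr (hGfin t)) ht
        (Or.inr (ENNReal.mul_ne_top (hGfin t) (hGfin t)))).liminf_eq.symm
    calc ∫⁻ t, G t * G t * G t
        = ∫⁻ t, liminf (fun n : ℕ => G t * (∫⁻ x, G (t + x) * dk (en n) x)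
            * (∫⁻ x, G (t + x) * dk (en n) x)) atTop := lintegral_congr_ae h1
      _ ≤ liminf (fun n : ℕ => ∫⁻ t, G t * (∫⁻ x, G (t + x) * dk (en n) x)
            * (∫⁻ x, G (t + x) * dk (en n) x)) atTop :=
        lintegral_liminf_le fun n =>
          (hGm.mul (deck_measB hGm (dk_meas _))).mul (deck_measB hGm (dk_meas _))
      _ ≤ M := le_trans (liminf_le_liminf (Eventually.of_forall fun n => hup3 (hen n)))
        (by simp [liminf_const])
  -- back to the real world
  have hQM : Q = M := le_antisymm hQle hlow
  have hofg2 : ∀ t, ENNReal.ofReal (g t * g t) = G t * G t :=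
    fun t => ENNReal.ofReal_mul (hg0 t)
  have hofg3 : ∀ t, ENNReal.ofReal (g t * g t * g t) = G t * G t * G t := fun t => by
    rw [ENNReal.ofReal_mul (mul_nonneg (hg0 t) (hg0 t)), ENNReal.ofReal_mul (hg0 t)]
  have hg2 : Integrable (fun t => g t * g t) := by
    refine ⟨(hgm.mul hgm).aestronglyMeasurable, ?_⟩
    rw [hasFiniteIntegral_iff_ofReal
      (Eventually.of_forall fun t => mul_nonneg (hg0 t) (hg0 t))]
    have : ∫⁻ t, ENNReal.ofReal (g t * g t) = Q := by
      rw [hQdef]; exact lintegral_congr hofg2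
    rw [this, hQM]
    exact hEfin
  have hg3 : Integrable (fun t => g t * g t * g t) := by
    refine ⟨((hgm.mul hgm).mul hgm).aestronglyMeasurable, ?_⟩
    rw [hasFiniteIntegral_iff_ofReal
      (Eventually.of_forall fun t => mul_nonneg (mul_nonneg (hg0 t) (hg0 t)) (hg0 t))]
    have : ∫⁻ t, ENNReal.ofReal (g t * g t * g t) = ∫⁻ t, G t * G t * G t :=
      lintegral_congr hofg3
    rw [this]
    exact lt_of_le_of_lt hcube hEfin
  have hint1 : ∫ t, g t = M.toReal := by
    rw [integral_eq_lintegral_of_nonneg_ae (Eventually.of_forall hg0)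
      hgm.aestronglyMeasurable]
    exact congrArg ENNReal.toReal hI
  have hint2 : ∫ t, g t * g t = M.toReal := by
    rw [integral_eq_lintegral_of_nonneg_ae
      (Eventually.of_forall fun t => mul_nonneg (hg0 t) (hg0 t))
      (hgm.mul hgm).aestronglyMeasurable]
    have h2 : ∫⁻ t, ENNReal.ofReal (g t * g t) = M := by
      rw [lintegral_congr hofg2]; rw [← hQdef, hQM]
    exact congrArg ENNReal.toReal h2
  have hint3 : ∫ t, g t * g t * g t ≤ M.toReal := by
    rw [integral_eq_lintegral_of_nonneg_ae
      (Eventually.of_forall fun t => mul_nonneg (mul_nonneg (hg0 t) (hg0 t)) (hg0 t))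
      ((hgm.mul hgm).mul hgm).aestronglyMeasurable]
    have h2 : ∫⁻ t, ENNReal.ofReal (g t * g t * g t) ≤ M := by
      rw [lintegral_congr hofg3]; exact hcube
    exact ENNReal.toReal_mono hMne h2
  have hsub : Integrable (fun t => g t * g t * g t - 2 * (g t * g t)) :=
    hg3.sub (hg2.const_mul 2)
  have hphi_int : Integrable (fun t => g t * g t * g t - 2 * (g t * g t) + g t) :=
    hsub.add hg
  have hphi_nn : ∀ t, 0 ≤ g t * g t * g t - 2 * (g t * g t) + g t := by
    intro t
    nlinarith [mul_nonneg (hg0 t) (sq_nonneg (g t - 1))]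
  have hphi0 : ∀ᵐ t : ℝ, g t * g t * g t - 2 * (g t * g t) + g t = 0 := by
    have hle : ∫ t, (g t * g t * g t - 2 * (g t * g t) + g t) ≤ 0 := by
      rw [integral_add hsub hg,
        integral_sub hg3 (hg2.const_mul 2), integral_const_mul, hint1, hint2]
      linarith [hint3]
    have h0 : ∫ t, (g t * g t * g t - 2 * (g t * g t) + g t) = 0 :=
      le_antisymm hle (integral_nonneg hphi_nn)
    have := (integral_eq_zero_iff_of_nonneg hphi_nn hphi_int).mp h0
    filter_upwards [this] with t ht
    exact ht
  have hae01 : ∀ᵐ t : ℝ, g t = 0 ∨ g t = 1 := by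
    filter_upwards [hphi0] with t ht
    have h1 : g t * (g t - 1) ^ 2 = 0 := by
      rw [show g t * (g t - 1) ^ 2 = g t * g t * g t - 2 * (g t * g t) + g t from by ring, ht]
    rcases mul_eq_zero.mp h1 with h | h
    · exact Or.inl h
    · right
      have h2 := pow_eq_zero_iff (n := 2) (by norm_num) |>.mp h
      linarith [sub_eq_zero.mp h2]
  refine ⟨{x | g x = 1}, hgm (measurableSet_singleton 1), ?_, ?_⟩
  · have hle : ∀ x, ({x : ℝ | g x = 1}).indicator (fun _ => (1 : ℝ≥0∞)) x ≤ G x := by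
      intro x
      by_cases hx : g x = 1
      · have hmem : x ∈ {x : ℝ | g x = 1} := hx
        rw [indicator_of_mem hmem]
        simp [hG, hx]
      · have hmem : x ∉ {x : ℝ | g x = 1} := hx
        rw [indicator_of_notMem hmem]
        exact zero_le
    calc volume {x : ℝ | g x = 1}
        = ∫⁻ x, ({x : ℝ | g x = 1}).indicator (fun _ => (1 : ℝ≥0∞)) x :=
        (lintegral_indicator_one (hgm (measurableSet_singleton 1))).symm
      _ ≤ ∫⁻ x, G x := lintegral_mono hle
      _ = M := hI
      _ < ⊤ := hEfin
  · filter_upwards [hae01] with x hx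
    rcases hx with h0 | h1
    · have hxm : x ∉ {x : ℝ | g x = 1} := by simp [Set.mem_setOf_eq, h0]
      rw [indicator_of_notMem hxm, h0]
    · have hxm : x ∈ {x : ℝ | g x = 1} := h1
      rw [indicator_of_mem hxm, h1]


/-- if a nonnegative integrable `g` has the same 3-deck as the
indicator of a set `E` of finite measure, then `g` is a.e. equal to the
indicator of some measurable set `F` of finite measure. -/
theorem same_3deck_as_set_is_set (E : Set ℝ) (hE : MeasurableSet E)
    (hEfin : volume E < ⊤) (g : ℝ → ℝ) (hg : Integrable g) (hg0 : ∀ t, 0 ≤ g t)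
    (hN : ∀ᵐ p : ℝ × ℝ,
      (∫ t : ℝ, E.indicator (fun _ => (1 : ℝ)) t *
        E.indicator (fun _ => (1 : ℝ)) (t + p.1) *
        E.indicator (fun _ => (1 : ℝ)) (t + p.2)) =
      (∫ t : ℝ, g t * g (t + p.1) * g (t + p.2))) :
    ∃ F : Set ℝ, MeasurableSet F ∧ volume F < ⊤ ∧
      ∀ᵐ x : ℝ, g x = F.indicator (fun _ => (1 : ℝ)) x := by
  classical
  set g' : ℝ → ℝ := fun x => max (hg.1.mk g x) 0 with hg'def
  have hg'm : Measurable g' := hg.1.measurable_mk.max measurable_const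
  have heq : g =ᵐ[volume] g' := by
    filter_upwards [hg.1.ae_eq_mk] with x hx
    rw [hg'def]
    simp only [← hx]
    exact (max_eq_left (hg0 x)).symm
  have hg' : Integrable g' := hg.congr heq
  have hg'0 : ∀ t, 0 ≤ g' t := fun t => le_max_right _ _
  have htrans : ∀ c : ℝ, (fun t : ℝ => g (t + c)) =ᵐ[volume] fun t : ℝ => g' (t + c) :=
    fun c => (measurePreserving_add_right volume c).quasiMeasurePreserving.ae_eq_comp heq
  have hgg' : ∀ p : ℝ × ℝ, (∫ t : ℝ, g t * g (t + p.1) * g (t + p.2))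
      = ∫ t : ℝ, g' t * g' (t + p.1) * g' (t + p.2) := by
    intro p
    apply integral_congr_ae
    filter_upwards [heq, htrans p.1, htrans p.2] with t h1 h2 h3
    have h2' : g (t + p.1) = g' (t + p.1) := h2
    have h3' : g (t + p.2) = g' (t + p.2) := h3
    rw [h1, h2', h3']
  have hN' : ∀ᵐ p : ℝ × ℝ,
      (∫ t : ℝ, E.indicator (fun _ => (1 : ℝ)) t *
        E.indicator (fun _ => (1 : ℝ)) (t + p.1) *
        E.indicator (fun _ => (1 : ℝ)) (t + p.2)) =
      (∫ t : ℝ, g' t * g' (t + p.1) * g' (t + p.2)) := by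
    filter_upwards [hN] with p hp
    rw [hp, hgg' p]
  obtain ⟨F, h1, h2, h3⟩ := deck_aux E hE hEfin g' hg'm hg' hg'0 hN'
  refine ⟨F, h1, h2, ?_⟩
  filter_upwards [heq, h3] with x hx h'
  rw [hx, h']
end

section
/- Let p be an odd prime and n = p^a. Then every subset E of ℤ/nℤ is determined up to translation by its 3-deck: if F ⊆ ℤ/nℤ has the same 3-deck as E, then F = E + a for some a ∈ ℤ/nℤ. -/
set_option linter.unusedSectionVars false
set_option maxHeartbeats 1000000

/-- The 3-deck of `E ⊆ ℤ/nℤ`: `N_E(j₁,j₂) = #{j : j ∈ E, j+j₁ ∈ E, j+j₂ ∈ E}`. -/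
def deck3 {n : ℕ} [NeZero n] (E : Finset (ZMod n)) (j₁ j₂ : ZMod n) : ℕ :=
  (Finset.univ.filter (fun j : ZMod n => j ∈ E ∧ j + j₁ ∈ E ∧ j + j₂ ∈ E)).card

namespace Deck3X

open Complex Polynomial Finset
open scoped Real ComplexConjugate

variable {n : ℕ} [NeZero n]

noncomputable def zeta (n : ℕ) : ℂ := Complex.exp (2 * Real.pi * Complex.I / n)

lemma hzeta (n : ℕ) [NeZero n] : IsPrimitiveRoot (zeta n) n :=
  Complex.isPrimitiveRoot_exp n (NeZero.ne n)

noncomputable def ee (x : ZMod n) : ℂ := zeta n ^ x.val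

lemma zeta_pow_mod (j : ℕ) : zeta n ^ j = zeta n ^ (j % n) := by
  conv_lhs => rw [← Nat.mod_add_div j n, pow_add, pow_mul, (hzeta n).pow_eq_one, one_pow, mul_one]

lemma ee_natCast (j : ℕ) : ee ((j : ZMod n)) = zeta n ^ j := by
  rw [ee, ZMod.val_natCast, ← zeta_pow_mod]

lemma ee_add (x y : ZMod n) : ee (x + y) = ee x * ee y := by
  rw [ee, ee, ee, ZMod.val_add, ← zeta_pow_mod, pow_add]

lemma ee_zero : ee (0 : ZMod n) = 1 := by rw [ee, ZMod.val_zero, pow_zero]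

lemma abs_ee (x : ZMod n) : ‖ee x‖ = 1 := by
  rw [ee, norm_pow]
  have : zeta n = Complex.exp ((((2 * Real.pi) / n : ℝ)) * Complex.I) := by
    rw [zeta]; push_cast; ring_nf
  rw [this, Complex.norm_exp_ofReal_mul_I, one_pow]

lemma ee_ne_zero (x : ZMod n) : ee x ≠ 0 := by
  intro h; have := abs_ee x; rw [h] at this; simp at this

lemma ee_neg (x : ZMod n) : ee (-x) = (ee x)⁻¹ := by
  field_simp [ee_ne_zero x]; rw [← ee_add]; simp [ee_zero]

lemma conj_ee (x : ZMod n) : conj (ee x) = ee (-x) := by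
  rw [ee_neg, ← RCLike.inv_eq_conj (by rw [abs_ee])]

lemma ee_nat_mul (s : ℕ) (x : ZMod n) : ee ((s : ZMod n) * x) = ee x ^ s := by
  induction s with
  | zero => simp [ee_zero]
  | succ t ih => push_cast; rw [add_mul, one_mul, ee_add, ih, pow_succ]

noncomputable def ind (E : Finset (ZMod n)) (j : ZMod n) : ℂ := if j ∈ E then 1 else 0

noncomputable def Ehat (E : Finset (ZMod n)) (k : ZMod n) : ℂ := ∑ j ∈ E, ee (j * k)

lemma conj_ind (E : Finset (ZMod n)) (j : ZMod n) : conj (ind E j) = ind E j := by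
  rw [ind]; split_ifs <;> simp

lemma Ehat_ind (E : Finset (ZMod n)) (k : ZMod n) :
    Ehat E k = ∑ j : ZMod n, ind E j * ee (j * k) := by
  rw [Ehat]
  have : ∀ j : ZMod n, ind E j * ee (j * k) = if j ∈ E then ee (j * k) else 0 := fun j => by
    rw [ind]; split_ifs <;> simp
  simp_rw [this]
  rw [Finset.sum_ite_mem, Finset.univ_inter]

lemma conj_Ehat (E : Finset (ZMod n)) (k : ZMod n) :
    conj (Ehat E k) = ∑ j : ZMod n, ind E j * ee (-(j * k)) := by
  rw [Ehat_ind, map_sum]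
  exact Finset.sum_congr rfl fun j _ => by rw [map_mul, conj_ind, conj_ee]

lemma Ehat_zero (E : Finset (ZMod n)) : Ehat E 0 = (E.card : ℂ) := by
  rw [Ehat]; simp [ee_zero]

lemma deck3_cast (E : Finset (ZMod n)) (j₁ j₂ : ZMod n) :
    (deck3 E j₁ j₂ : ℂ) = ∑ j : ZMod n, ind E j * ind E (j + j₁) * ind E (j + j₂) := by
  rw [deck3, Finset.card_filter]
  push_cast
  refine Finset.sum_congr rfl fun j _ => ?_
  rw [ind, ind, ind]
  by_cases h1 : j ∈ E <;> by_cases h2 : j + j₁ ∈ E <;> by_cases h3 : j + j₂ ∈ E <;>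
    simp [h1, h2, h3]

lemma deck_sum (E : Finset (ZMod n)) (k₁ k₂ : ZMod n) :
    ∑ j₁ : ZMod n, ∑ j₂ : ZMod n, (deck3 E j₁ j₂ : ℂ) * ee (-(j₁ * k₁)) * ee (-(j₂ * k₂))
      = Ehat E (k₁ + k₂) * conj (Ehat E k₁) * conj (Ehat E k₂) := by
  have rhs : Ehat E (k₁ + k₂) * conj (Ehat E k₁) * conj (Ehat E k₂)
      = ∑ j : ZMod n, ∑ m₂ : ZMod n, ∑ m₁ : ZMod n,
          ind E j * ind E m₁ * ind E m₂ * ee (j * (k₁ + k₂) + -(m₁ * k₁) + -(m₂ * k₂)) := by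
    rw [Ehat_ind, conj_Ehat, conj_Ehat, Finset.sum_mul_sum, Finset.sum_mul_sum]
    refine Finset.sum_congr rfl fun j _ => Finset.sum_congr rfl fun m₂ _ => ?_
    rw [Finset.sum_mul]
    refine Finset.sum_congr rfl fun m₁ _ => ?_
    rw [ee_add, ee_add]; ring
  rw [rhs]
  calc ∑ j₁ : ZMod n, ∑ j₂ : ZMod n, (deck3 E j₁ j₂ : ℂ) * ee (-(j₁ * k₁)) * ee (-(j₂ * k₂))
      = ∑ j₁ : ZMod n, ∑ j₂ : ZMod n, ∑ j : ZMod n,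
          ind E j * ind E (j + j₁) * ind E (j + j₂) * ee (-(j₁ * k₁) + -(j₂ * k₂)) := by
        refine Finset.sum_congr rfl fun j₁ _ => Finset.sum_congr rfl fun j₂ _ => ?_
        rw [deck3_cast, Finset.sum_mul, Finset.sum_mul]
        refine Finset.sum_congr rfl fun j _ => by rw [ee_add]; ring
    _ = ∑ j₁ : ZMod n, ∑ j : ZMod n, ∑ j₂ : ZMod n,
          ind E j * ind E (j + j₁) * ind E (j + j₂) * ee (-(j₁ * k₁) + -(j₂ * k₂)) := by
        exact Finset.sum_congr rfl fun j₁ _ => Finset.sum_comm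
    _ = ∑ j : ZMod n, ∑ j₁ : ZMod n, ∑ j₂ : ZMod n,
          ind E j * ind E (j + j₁) * ind E (j + j₂) * ee (-(j₁ * k₁) + -(j₂ * k₂)) := by
        exact Finset.sum_comm
    _ = ∑ j : ZMod n, ∑ j₂ : ZMod n, ∑ j₁ : ZMod n,
          ind E j * ind E (j + j₁) * ind E (j + j₂) * ee (-(j₁ * k₁) + -(j₂ * k₂)) := by
        exact Finset.sum_congr rfl fun j _ => Finset.sum_comm
    _ = ∑ j : ZMod n, ∑ m₂ : ZMod n, ∑ m₁ : ZMod n,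
          ind E j * ind E m₁ * ind E m₂ * ee (j * (k₁ + k₂) + -(m₁ * k₁) + -(m₂ * k₂)) := by
        refine Finset.sum_congr rfl fun j _ => ?_
        refine Fintype.sum_equiv (Equiv.addLeft j) _ _ fun j₂ => ?_
        refine Fintype.sum_equiv (Equiv.addLeft j) _ _ fun j₁ => ?_
        show ind E j * ind E (j + j₁) * ind E (j + j₂) * ee (-(j₁ * k₁) + -(j₂ * k₂))
          = ind E j * ind E (j + j₁) * ind E (j + j₂)
            * ee (j * (k₁ + k₂) + -((j + j₁) * k₁) + -((j + j₂) * k₂))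
        congr 2
        ring

lemma orth {d : ZMod n} (hd : d ≠ 0) : ∑ k : ZMod n, ee (d * k) = 0 := by
  have hne1 : ee d ≠ 1 := by
    rw [ee]
    intro hpow
    have hdvd := (hzeta n).dvd_of_pow_eq_one _ hpow
    have hlt := ZMod.val_lt d
    have hv0 : d.val = 0 := Nat.eq_zero_of_dvd_of_lt hdvd hlt
    exact hd (by rwa [← ZMod.val_eq_zero])
  have key : ee d * ∑ k : ZMod n, ee (d * k) = ∑ k : ZMod n, ee (d * k) := by
    rw [Finset.mul_sum]
    have hterm : ∀ k : ZMod n, ee d * ee (d * k) = ee (d * (k + 1)) := fun k => by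
      rw [← ee_add]; congr 1; ring
    simp_rw [hterm]
    exact Fintype.sum_equiv (Equiv.addRight (1 : ZMod n)) _ _ fun k => rfl
  have hz : (ee d - 1) * ∑ k : ZMod n, ee (d * k) = 0 := by linear_combination key
  rcases mul_eq_zero.mp hz with h | h
  · exact absurd (sub_eq_zero.mp h) hne1
  · exact h

lemma Ehat_inj (F G : Finset (ZMod n)) (h : ∀ k, Ehat F k = Ehat G k) : F = G := by
  have inv : ∀ (S : Finset (ZMod n)) (j : ZMod n),
      ∑ k : ZMod n, Ehat S k * ee (-(j * k)) = (n : ℂ) * ind S j := by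
    intro S j
    calc ∑ k : ZMod n, Ehat S k * ee (-(j * k))
        = ∑ k : ZMod n, ∑ m : ZMod n, ind S m * ee ((m - j) * k) := by
          refine Finset.sum_congr rfl fun k _ => ?_
          rw [Ehat_ind, Finset.sum_mul]
          refine Finset.sum_congr rfl fun m _ => ?_
          rw [mul_assoc, ← ee_add]
          congr 2
          ring
      _ = ∑ m : ZMod n, ∑ k : ZMod n, ind S m * ee ((m - j) * k) := Finset.sum_comm
      _ = ∑ m : ZMod n, ind S m * ∑ k : ZMod n, ee ((m - j) * k) := by
          simp_rw [Finset.mul_sum]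
      _ = (n : ℂ) * ind S j := by
          rw [Finset.sum_eq_single j]
          · rw [sub_self]
            have hz : ∀ k : ZMod n, ee ((0 : ZMod n) * k) = 1 := fun k => by
              rw [zero_mul, ee_zero]
            simp_rw [hz]
            simp [ZMod.card, mul_comm]
          · intro m _ hm
            rw [orth (by simpa [sub_eq_zero] using hm), mul_zero]
          · intro hj; exact absurd (Finset.mem_univ j) hj
  ext j
  have h2 := inv F j
  rw [Finset.sum_congr rfl (fun k _ => by rw [h k]), inv G j] at h2
  have hn0 : (n : ℂ) ≠ 0 := Nat.cast_ne_zero.mpr (NeZero.ne n)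
  have hind := mul_left_cancel₀ hn0 h2.symm
  constructor
  · intro hF; by_contra hG; simp [ind, hF, hG] at hind
  · intro hG; by_contra hF; simp [ind, hF, hG] at hind

lemma Ehat_image (E : Finset (ZMod n)) (c k : ZMod n) :
    Ehat (E.image (· + c)) k = ee (c * k) * Ehat E k := by
  rw [Ehat, Finset.sum_image (fun a _ b _ hab => by simpa using hab), Ehat, Finset.mul_sum]
  refine Finset.sum_congr rfl fun j _ => ?_
  rw [← ee_add]
  congr 1
  ring

lemma Ehat_eq_aeval (E : Finset (ZMod n)) (k : ZMod n) :
    Ehat E k = Polynomial.aeval (zeta n ^ k.val) (∑ j ∈ E, (X : ℚ[X]) ^ j.val) := by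
  rw [map_sum, Ehat]
  refine Finset.sum_congr rfl fun j _ => ?_
  rw [map_pow, aeval_X, ee, ZMod.val_mul, ← zeta_pow_mod, ← pow_mul, mul_comm j.val k.val, pow_mul]

lemma prim_pow (k : ZMod n) :
    IsPrimitiveRoot (zeta n ^ k.val) (n / Nat.gcd k.val n) := by
  have npos : 0 < n := Nat.pos_of_ne_zero (NeZero.ne n)
  have hg : Nat.gcd k.val n ∣ n := Nat.gcd_dvd_right _ _
  have hgk : Nat.gcd k.val n ∣ k.val := Nat.gcd_dvd_left _ _
  have hgpos : 0 < Nat.gcd k.val n := Nat.gcd_pos_of_pos_right _ npos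
  have h1 : IsPrimitiveRoot (zeta n ^ Nat.gcd k.val n) (n / Nat.gcd k.val n) :=
    (hzeta n).pow npos (Nat.mul_div_cancel' hg).symm
  have h2 := h1.pow_of_coprime (k.val / Nat.gcd k.val n) (Nat.coprime_div_gcd_div_gcd hgpos)
  rwa [← pow_mul, Nat.mul_div_cancel' hgk] at h2

lemma level_zero (E : Finset (ZMod n)) {k k' : ZMod n}
    (hg : Nat.gcd k.val n = Nat.gcd k'.val n) (h0 : Ehat E k = 0) : Ehat E k' = 0 := by
  have npos : 0 < n := Nat.pos_of_ne_zero (NeZero.ne n)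
  set d := n / Nat.gcd k.val n with hd
  have hdpos : 0 < d :=
    Nat.div_pos (Nat.le_of_dvd npos (Nat.gcd_dvd_right _ _)) (Nat.gcd_pos_of_pos_right _ npos)
  have hprim : IsPrimitiveRoot (zeta n ^ k.val) d := prim_pow k
  have hprim' : IsPrimitiveRoot (zeta n ^ k'.val) d := by
    rw [hd, hg]; exact prim_pow k'
  set P : ℚ[X] := ∑ j ∈ E, (X : ℚ[X]) ^ j.val with hP
  have haev : Polynomial.aeval (zeta n ^ k.val) P = 0 := by
    rw [hP, ← Ehat_eq_aeval]; exact h0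
  have hdvd : cyclotomic d ℚ ∣ P := by
    rw [cyclotomic_eq_minpoly_rat hprim hdpos]
    exact minpoly.dvd ℚ _ haev
  obtain ⟨Q, hQ⟩ := hdvd
  haveI : NeZero ((d : ℕ) : ℂ) := ⟨by exact_mod_cast hdpos.ne'⟩
  have hroot : Polynomial.aeval (zeta n ^ k'.val) (cyclotomic d ℚ) = 0 := by
    have hr := (Polynomial.isRoot_cyclotomic_iff (R := ℂ)).mpr hprim'
    rw [Polynomial.IsRoot.def] at hr
    rw [aeval_def, eval₂_eq_eval_map, map_cyclotomic]
    exact hr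
  rw [Ehat_eq_aeval, ← hP, hQ, map_mul, hroot, zero_mul]

end Deck3X

open Deck3X Complex Finset
open scoped ComplexConjugate

/-- for `p` an odd prime and `n = p^a`, every subset of `ℤ/nℤ` is
determined up to translation by its 3-deck. -/
theorem zmod_prime_power_3deck (p a n : ℕ) (hp : p.Prime) (hodd : p ≠ 2)
    (hn : n = p ^ a) [NeZero n] (E F : Finset (ZMod n))
    (h : ∀ j₁ j₂ : ZMod n, deck3 E j₁ j₂ = deck3 F j₁ j₂) :
    ∃ c : ZMod n, F = E.image (· + c) := by
  classical
  have npos : 0 < n := Nat.pos_of_ne_zero (NeZero.ne n)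
  have hdeckE : deck3 E 0 0 = E.card := by
    rw [deck3]; congr 1; ext j; simp
  have hdeckF : deck3 F 0 0 = F.card := by
    rw [deck3]; congr 1; ext j; simp
  have hcard : F.card = E.card := by rw [← hdeckF, ← h 0 0, hdeckE]
  by_cases hEe : E = ∅
  · refine ⟨0, ?_⟩
    have h0 : F.card = 0 := by rw [hcard, hEe]; simp
    rw [Finset.card_eq_zero] at h0
    rw [h0, hEe]; simp
  have hEne : E.Nonempty := Finset.nonempty_iff_ne_empty.mpr hEe
  have hcne : ((E.card : ℂ)) ≠ 0 := Nat.cast_ne_zero.mpr (Finset.card_ne_zero.mpr hEne)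
  have tripl : ∀ k₁ k₂ : ZMod n,
      Ehat F (k₁ + k₂) * conj (Ehat F k₁) * conj (Ehat F k₂)
        = Ehat E (k₁ + k₂) * conj (Ehat E k₁) * conj (Ehat E k₂) := by
    intro k₁ k₂
    rw [← deck_sum, ← deck_sum]
    exact Finset.sum_congr rfl fun j₁ _ => Finset.sum_congr rfl fun j₂ _ => by rw [h j₁ j₂]
  have hE0 : Ehat E 0 = (E.card : ℂ) := Ehat_zero E
  have hF0 : Ehat F 0 = (E.card : ℂ) := by rw [Ehat_zero, hcard]
  have hE0ne : Ehat E 0 ≠ 0 := by rw [hE0]; exact hcne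
  have L2 : ∀ k, Ehat F k * conj (Ehat F k) = Ehat E k * conj (Ehat E k) := by
    intro k
    have t := tripl k 0
    rw [add_zero, hE0, hF0, Complex.conj_natCast] at t
    exact mul_right_cancel₀ hcne t
  have hzero : ∀ k, Ehat E k = 0 → Ehat F k = 0 := by
    intro k hk
    have t := L2 k
    rw [hk, zero_mul, Complex.mul_conj] at t
    have hsq : Complex.normSq (Ehat F k) = 0 := by exact_mod_cast t
    exact Complex.normSq_eq_zero.mp hsq
  have hne : ∀ k, Ehat E k ≠ 0 → Ehat F k ≠ 0 := by
    intro k hk hF2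
    apply hk
    have t := (L2 k).symm
    rw [hF2, zero_mul, Complex.mul_conj] at t
    have hsq : Complex.normSq (Ehat E k) = 0 := by exact_mod_cast t
    exact Complex.normSq_eq_zero.mp hsq
  have mult : ∀ k₁ k₂ : ZMod n, Ehat E k₁ ≠ 0 → Ehat E k₂ ≠ 0 → Ehat E (k₁ + k₂) ≠ 0 →
      Ehat F (k₁ + k₂) * Ehat E k₁ * Ehat E k₂ = Ehat E (k₁ + k₂) * Ehat F k₁ * Ehat F k₂ := by
    intro k₁ k₂ h1 h2 h12
    have hf1 := hne k₁ h1
    have hf2 := hne k₂ h2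
    have hc1 : conj (Ehat F k₁) ≠ 0 := fun hc => hf1 (by
      have := congrArg conj hc; simpa using this)
    have hc2 : conj (Ehat F k₂) ≠ 0 := fun hc => hf2 (by
      have := congrArg conj hc; simpa using this)
    have key := tripl k₁ k₂
    have e1 := L2 k₁
    have e2 := L2 k₂
    apply mul_right_cancel₀ hc1
    apply mul_right_cancel₀ hc2
    linear_combination (Ehat E k₁ * Ehat E k₂) * key
      - (Ehat E (k₁ + k₂) * Ehat F k₂ * conj (Ehat F k₂)) * e1
      - (Ehat E (k₁ + k₂) * Ehat E k₁ * conj (Ehat E k₁)) * e2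
  -- minimal level
  have hQa : ∃ k : ZMod n, Ehat E k ≠ 0 ∧ Nat.gcd (ZMod.val k) n = p ^ a :=
    ⟨0, hE0ne, by rw [ZMod.val_zero, Nat.gcd_zero_left, hn]⟩
  have hQex : ∃ i, ∃ k : ZMod n, Ehat E k ≠ 0 ∧ Nat.gcd (ZMod.val k) n = p ^ i := ⟨a, hQa⟩
  set m := Nat.find hQex with hm
  obtain ⟨k₀, hk₀ne, hk₀g⟩ := Nat.find_spec hQex
  rw [← hm] at hk₀g
  have hma : m ≤ a := by rw [hm]; exact Nat.find_min' hQex hQa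
  have levelA : ∀ k : ZMod n, Nat.gcd k.val n = p ^ m → Ehat E k ≠ 0 := by
    intro k hk hzk
    exact hk₀ne (level_zero E (by rw [hk, hk₀g]) hzk)
  have hp1 : ¬ p ∣ 1 := fun hd => hp.ne_one (Nat.eq_one_of_dvd_one hd)
  have hp2 : ¬ p ∣ 2 := by
    intro hd
    rcases (Nat.dvd_prime Nat.prime_two).mp hd with h1 | h1
    · exact hp.ne_one h1
    · exact hodd h1
  set pm : ZMod n := ((p ^ m : ℕ) : ZMod n) with hpm
  have hgcd_t : ∀ t : ℕ, ¬ p ∣ t → Nat.gcd (((t : ZMod n) * pm).val) n = p ^ m := by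
    intro t ht
    have hcast : (t : ZMod n) * pm = ((t * p ^ m : ℕ) : ZMod n) := by
      rw [hpm]; push_cast; ring
    rw [hcast, ZMod.val_natCast]
    have h1 : Nat.gcd ((t * p ^ m) % n) n = Nat.gcd (t * p ^ m) n := by
      rw [← Nat.gcd_rec, Nat.gcd_comm]
    rw [h1, hn]
    have hsplit : p ^ a = p ^ m * p ^ (a - m) := by rw [← pow_add]; congr 1; omega
    rw [hsplit, mul_comm t (p ^ m), Nat.gcd_mul_left]
    have hcop : Nat.gcd t (p ^ (a - m)) = 1 :=
      Nat.Coprime.pow_right _ (((Nat.Prime.coprime_iff_not_dvd hp).mpr ht).symm)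
    rw [hcop, mul_one]
  have hEt : ∀ t : ℕ, ¬ p ∣ t → Ehat E ((t : ZMod n) * pm) ≠ 0 :=
    fun t ht => levelA _ (hgcd_t t ht)
  have hEpm : Ehat E pm ≠ 0 := by
    have := hEt 1 hp1; rwa [Nat.cast_one, one_mul] at this
  have hFpm' := hne pm hEpm
  set ρ : ℂ := Ehat F pm / Ehat E pm with hρ
  have hFpm : Ehat F pm = ρ * Ehat E pm := by
    rw [hρ, div_mul_cancel₀ _ hEpm]
  have hρne : ρ ≠ 0 := div_ne_zero hFpm' hEpm
  -- step lemma
  have hstep : ∀ t : ℕ, ¬ p ∣ t →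
      Ehat F ((t : ZMod n) * pm) = ρ ^ t * Ehat E ((t : ZMod n) * pm) := by
    intro t
    induction t using Nat.strong_induction_on with
    | _ t ih =>
    intro ht
    by_cases h1 : t = 1
    · subst h1; rw [Nat.cast_one, one_mul, pow_one]; exact hFpm
    by_cases h2 : t = 2
    · subst h2
      have hcast : ((2 : ℕ) : ZMod n) * pm = pm + pm := by push_cast; ring
      have hE2 : Ehat E (pm + pm) ≠ 0 := by rw [← hcast]; exact hEt 2 hp2
      have key := mult pm pm hEpm hEpm hE2
      rw [hFpm] at key
      rw [hcast]
      apply mul_right_cancel₀ hEpm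
      apply mul_right_cancel₀ hEpm
      linear_combination key
    have ht0 : t ≠ 0 := by rintro rfl; exact ht (dvd_zero p)
    have ht3 : 3 ≤ t := by
      rcases Nat.lt_or_ge t 3 with hlt | hge
      · interval_cases t <;> simp_all
      · exact hge
    by_cases hts : p ∣ (t - 1)
    · -- step by 2
      have htm2 : ¬ p ∣ (t - 2) := by
        intro hd
        have hsub := Nat.dvd_sub hts hd
        rw [show t - 1 - (t - 2) = 1 by omega] at hsub
        exact hp1 hsub
      have ih2 := ih (t - 2) (by omega) htm2
      have ihtwo := ih 2 (by omega) hp2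
      have hsum : (((t - 2 : ℕ)) : ZMod n) * pm + ((2 : ℕ) : ZMod n) * pm = (t : ZMod n) * pm := by
        rw [Nat.cast_sub (by omega)]; push_cast; ring
      have hEsum : Ehat E ((((t - 2 : ℕ)) : ZMod n) * pm + ((2 : ℕ) : ZMod n) * pm) ≠ 0 := by
        rw [hsum]; exact hEt t ht
      have key := mult _ _ (hEt (t - 2) htm2) (hEt 2 hp2) hEsum
      rw [ih2, ihtwo] at key
      have hpow : ρ ^ t = ρ ^ (t - 2) * ρ ^ 2 := by rw [← pow_add]; congr 1; omega
      rw [← hsum, hpow]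
      apply mul_right_cancel₀ (hEt (t - 2) htm2)
      apply mul_right_cancel₀ (hEt 2 hp2)
      linear_combination key
    · -- step by 1
      have ih1 := ih (t - 1) (by omega) hts
      have hsum : (((t - 1 : ℕ)) : ZMod n) * pm + ((1 : ℕ) : ZMod n) * pm = (t : ZMod n) * pm := by
        rw [Nat.cast_sub (by omega)]; push_cast; ring
      have hEsum : Ehat E ((((t - 1 : ℕ)) : ZMod n) * pm + ((1 : ℕ) : ZMod n) * pm) ≠ 0 := by
        rw [hsum]; exact hEt t ht
      have key := mult _ _ (hEt (t - 1) hts) (hEt 1 hp1) hEsum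
      have h1pm : ((1 : ℕ) : ZMod n) * pm = pm := by rw [Nat.cast_one, one_mul]
      rw [ih1, h1pm, hFpm] at key
      have hpow : ρ ^ t = ρ ^ (t - 1) * ρ := by
        rw [← pow_succ]; congr 1; omega
      rw [← hsum, h1pm, hpow]
      apply mul_right_cancel₀ (hEt (t - 1) hts)
      apply mul_right_cancel₀ hEpm
      linear_combination key
  -- ρ is a root of unity
  have hρpow : ρ ^ (p ^ (a - m)) = 1 := by
    rcases Nat.eq_or_lt_of_le hma with heq | hlt
    · have hpm0 : pm = 0 := by
        rw [hpm, heq, ← hn, ZMod.natCast_self]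
      have hρ1 : ρ = 1 := by rw [hρ, hpm0, hF0, hE0, div_self hcne]
      rw [hρ1, one_pow]
    · have hdvd1 : ¬ p ∣ (1 + p ^ (a - m)) := by
        intro hd
        have h2 : p ∣ p ^ (a - m) := dvd_pow_self p (by omega)
        have hsub := Nat.dvd_sub hd h2
        rw [Nat.add_sub_cancel] at hsub
        exact hp1 hsub
      have hs := hstep (1 + p ^ (a - m)) hdvd1
      have hcollapse : (((1 + p ^ (a - m) : ℕ)) : ZMod n) * pm = pm := by
        have hz : ((p ^ (a - m) : ℕ) : ZMod n) * pm = 0 := by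
          rw [hpm, ← Nat.cast_mul, ← pow_add, show a - m + m = a by omega, ← hn,
            ZMod.natCast_self]
        push_cast at hz ⊢
        rw [add_mul, one_mul, hz, add_zero]
      rw [hcollapse] at hs
      have hcanc := mul_right_cancel₀ hEpm (hFpm.symm.trans hs)
      rw [pow_add, pow_one] at hcanc
      have hfin := mul_left_cancel₀ hρne
        (show ρ * 1 = ρ * ρ ^ (p ^ (a - m)) by rw [mul_one]; exact hcanc)
      exact hfin.symm
  haveI : NeZero (p ^ (a - m)) := ⟨(pow_pos hp.pos _).ne'⟩
  have hprimN : IsPrimitiveRoot (ee pm) (p ^ (a - m)) := by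
    have hee : ee pm = zeta n ^ (p ^ m) := by
      rw [Deck3X.ee, hpm, ZMod.val_natCast, ← zeta_pow_mod]
    rw [hee]
    exact (hzeta n).pow npos (by rw [hn, ← pow_add, show m + (a - m) = a by omega])
  obtain ⟨s, hslt, hsρ⟩ := hprimN.eq_pow_of_pow_eq_one hρpow
  have hρee : ρ = ee ((s : ZMod n) * pm) := by rw [ee_nat_mul, hsρ]
  refine ⟨(s : ZMod n), ?_⟩
  apply Ehat_inj
  intro k
  rw [Ehat_image]
  by_cases hk : Ehat E k = 0
  · rw [hk, hzero k hk, mul_zero]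
  · obtain ⟨i, hia, hgi⟩ := (Nat.dvd_prime_pow hp).mp
      (show Nat.gcd k.val n ∣ p ^ a from hn ▸ Nat.gcd_dvd_right k.val n)
    have hmi : m ≤ i := by rw [hm]; exact Nat.find_min' hQex ⟨k, hk, hgi⟩
    have hpmk : p ^ m ∣ k.val := dvd_trans (pow_dvd_pow p hmi) (hgi ▸ Nat.gcd_dvd_left k.val n)
    set t := k.val / p ^ m with htdef
    have htk : (t : ZMod n) * pm = k := by
      rw [hpm, ← Nat.cast_mul, Nat.div_mul_cancel hpmk, ZMod.natCast_val, ZMod.cast_id]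
    have heeck : ee ((s : ZMod n) * k) = ρ ^ t := by
      rw [← htk, show (s : ZMod n) * ((t : ZMod n) * pm)
        = (t : ZMod n) * ((s : ZMod n) * pm) by ring, ee_nat_mul, ← hρee]
    rw [heeck]
    by_cases hpt : p ∣ t
    · have ht1 : ¬ p ∣ (t + 1) := by
        intro hd
        have hsub := Nat.dvd_sub hd hpt
        rw [show t + 1 - t = 1 by omega] at hsub
        exact hp1 hsub
      have hsum : (((t + 1 : ℕ)) : ZMod n) * pm = k + pm := by
        push_cast; rw [add_mul, one_mul, htk]
      have hEsum : Ehat E (k + pm) ≠ 0 := by rw [← hsum]; exact hEt (t + 1) ht1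
      have key := mult k pm hk hEpm hEsum
      have hs1 := hstep (t + 1) ht1
      rw [hsum] at hs1
      rw [hs1, hFpm, pow_succ] at key
      apply mul_right_cancel₀ hEsum
      apply mul_right_cancel₀ hEpm
      apply mul_right_cancel₀ hρne
      linear_combination -key
    · have hs1 := hstep t hpt
      rw [htk] at hs1
      exact hs1
end

section
/- Let f be a nonnegative integrable function on ℝ. Then lim inf as (x,y) → (0,0) of N_f(x,y) = ∫ f(t) f(t−x) f(t−y) dt is at least ∫ f³ dt, and combined with the upper bound N_f(x,y) ≤ ∫ f³ dt, one has lim_{(x,y)→(0,0)} N_f(x,y) = ∫_ℝ f(t)³ dt (where both sides may be +∞). -/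
open MeasureTheory Filter
open scoped ENNReal Topology

namespace KdeckAux


/-- translation invariance of lintegral on ℝ -/
lemma lintegral_shift (F : ℝ → ℝ≥0∞) (x : ℝ) :
    (∫⁻ t : ℝ, F (t - x)) = ∫⁻ t : ℝ, F t :=
  (measurePreserving_sub_right volume x).lintegral_comp_emb
    (MeasurableEquiv.subRight x).measurableEmbedding F

lemma hshift {g : ℝ → ℝ} (hm : AEMeasurable g (volume : Measure ℝ)) (x : ℝ) :
    AEMeasurable (fun t => g (t - x)) (volume : Measure ℝ) :=
  hm.comp_quasiMeasurePreserving (measurePreserving_sub_right volume x).quasiMeasurePreserving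

/-- L¹ continuity of translation -/
lemma tendsto_T (g : ℝ → ℝ) (hg : Integrable g) :
    Tendsto (fun x : ℝ => ∫⁻ t : ℝ, ENNReal.ofReal |g (t - x) - g t|) (𝓝 0) (𝓝 0) := by
  haveI : Fact ((1:ℝ≥0∞) ≤ 1) := ⟨le_rfl⟩
  set G : Lp ℝ 1 (volume : Measure ℝ) := (memLp_one_iff_integrable.mpr hg).toLp g with hG
  have hGg : ⇑G =ᵐ[volume] g := (memLp_one_iff_integrable.mpr hg).coeFn_toLp
  set cmap : ℝ → C(ℝ, ℝ) := fun x => ⟨fun t => t - x, by continuity⟩ with hcmap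
  have hcm : Continuous cmap := by
    apply ContinuousMap.continuous_of_continuous_uncurry
    exact continuous_snd.sub continuous_fst
  have hmp : ∀ x : ℝ, MeasurePreserving (cmap x) volume volume := fun x =>
    measurePreserving_sub_right volume x
  set H : ℝ → Lp ℝ 1 (volume : Measure ℝ) :=
    fun x => Lp.compMeasurePreserving (cmap x) (hmp x) G with hH
  have htend : Tendsto H (𝓝 0) (𝓝 (H 0)) :=
    Filter.Tendsto.compMeasurePreservingLp tendsto_const_nhds (hcm.tendsto 0) hmp (hmp 0)
      ENNReal.one_ne_top
  have hedist : Tendsto (fun x => edist (H x) (H 0)) (𝓝 0) (𝓝 0) := by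
    have := htend.edist (tendsto_const_nhds (x := H 0))
    simpa using this
  have hcoe : ∀ x : ℝ, ⇑(H x) =ᵐ[volume] fun t => g (t - x) := by
    intro x
    refine (Lp.coeFn_compMeasurePreserving G (hmp x)).trans ?_
    exact (hmp x).quasiMeasurePreserving.ae_eq_comp hGg
  have hkey : ∀ x : ℝ, edist (H x) (H 0) = ∫⁻ t : ℝ, ENNReal.ofReal |g (t - x) - g t| := by
    intro x
    rw [Lp.edist_def]
    have he : (⇑(H x) - ⇑(H 0)) =ᵐ[volume] fun t => g (t - x) - g t := by
      filter_upwards [hcoe x, hcoe 0] with t h1 h2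
      simp [Pi.sub_apply, h1, h2]
    rw [eLpNorm_congr_ae he, eLpNorm_one_eq_lintegral_enorm]
    congr 1
    ext t
    rw [← Real.enorm_eq_ofReal_abs]
  exact hedist.congr fun x => hkey x



lemma amgm (a b c : ℝ) (ha : 0 ≤ a) (hb : 0 ≤ b) (hc : 0 ≤ c) :
    3 * (a * b * c) ≤ a ^ 3 + b ^ 3 + c ^ 3 := by
  nlinarith [mul_nonneg (add_nonneg (add_nonneg ha hb) hc) (sq_nonneg (a - b)),
    mul_nonneg (add_nonneg (add_nonneg ha hb) hc) (sq_nonneg (b - c)),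
    mul_nonneg (add_nonneg (add_nonneg ha hb) hc) (sq_nonneg (a - c))]

lemma key (a b c M : ℝ) (ha : 0 ≤ a) (hc : 0 ≤ c) (haM : a ≤ M) (hcM : c ≤ M) :
    |a * b * c - a ^ 3| ≤ M ^ 2 * |b - a| + M ^ 2 * |c - a| := by
  have hM : 0 ≤ M := ha.trans haM
  have e : a * b * c - a ^ 3 = a * (b - a) * c + a * a * (c - a) := by ring
  calc |a * b * c - a ^ 3| ≤ |a * (b - a) * c| + |a * a * (c - a)| := by
        rw [e]; exact abs_add_le _ _
    _ ≤ M ^ 2 * |b - a| + M ^ 2 * |c - a| := by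
        simp only [abs_mul, abs_of_nonneg ha, abs_of_nonneg hc]
        have h1 : a * |b - a| * c ≤ M ^ 2 * |b - a| := by
          nlinarith [mul_nonneg (mul_nonneg (sub_nonneg.2 haM) (abs_nonneg (b - a))) hc,
            mul_nonneg (mul_nonneg hM (abs_nonneg (b - a))) (sub_nonneg.2 hcM)]
        have h2 : a * a * |c - a| ≤ M ^ 2 * |c - a| := by
          nlinarith [mul_nonneg (mul_nonneg (sub_nonneg.2 haM) ha) (abs_nonneg (c - a)),
            mul_nonneg (mul_nonneg hM (sub_nonneg.2 haM)) (abs_nonneg (c - a))]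
        linarith

lemma lintegral_shift' (F : ℝ → ℝ≥0∞) (x : ℝ) :
    (∫⁻ t : ℝ, F (t - x)) = ∫⁻ t : ℝ, F t :=
  (measurePreserving_sub_right volume x).lintegral_comp_emb
    (MeasurableEquiv.subRight x).measurableEmbedding F

lemma hshift' {g : ℝ → ℝ} (hm : AEMeasurable g (volume : Measure ℝ)) (x : ℝ) :
    AEMeasurable (fun t => g (t - x)) (volume : Measure ℝ) :=
  hm.comp_quasiMeasurePreserving (measurePreserving_sub_right volume x).quasiMeasurePreserving

lemma upper (f : ℝ → ℝ) (hf0 : ∀ t, 0 ≤ f t) (hm : AEMeasurable f (volume : Measure ℝ))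
    (x y : ℝ) :
    (∫⁻ t : ℝ, ENNReal.ofReal (f t * f (t - x) * f (t - y))) ≤
      ∫⁻ t : ℝ, ENNReal.ofReal (f t ^ 3) := by
  have hA : ∀ z : ℝ, AEMeasurable (fun t => ENNReal.ofReal (f (t - z) ^ 3)) (volume : Measure ℝ) :=
    fun z => ENNReal.measurable_ofReal.comp_aemeasurable ((hshift' hm z).pow_const 3)
  have hA0 : AEMeasurable (fun t => ENNReal.ofReal (f t ^ 3)) (volume : Measure ℝ) :=
    ENNReal.measurable_ofReal.comp_aemeasurable (hm.pow_const 3)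
  rw [← ENNReal.mul_le_mul_iff_right (a := 3) (by norm_num) (by norm_num)]
  calc (3:ℝ≥0∞) * ∫⁻ t : ℝ, ENNReal.ofReal (f t * f (t - x) * f (t - y))
      = ∫⁻ t : ℝ, ENNReal.ofReal (3 * (f t * f (t - x) * f (t - y))) := by
        rw [← lintegral_const_mul' _ _ (by norm_num : (3:ℝ≥0∞) ≠ ⊤)]
        congr 1; ext t
        rw [show (3:ℝ≥0∞) = ENNReal.ofReal 3 by norm_num,
          ← ENNReal.ofReal_mul (by norm_num)]
    _ ≤ ∫⁻ t : ℝ, (ENNReal.ofReal (f t ^ 3) + ENNReal.ofReal (f (t - x) ^ 3)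
          + ENNReal.ofReal (f (t - y) ^ 3)) := by
        refine lintegral_mono fun t => ?_
        calc ENNReal.ofReal (3 * (f t * f (t - x) * f (t - y)))
            ≤ ENNReal.ofReal (f t ^ 3 + f (t - x) ^ 3 + f (t - y) ^ 3) :=
              ENNReal.ofReal_le_ofReal (amgm _ _ _ (hf0 t) (hf0 _) (hf0 _))
          _ ≤ _ := by
              rw [ENNReal.ofReal_add (add_nonneg (pow_nonneg (hf0 t) 3) (pow_nonneg (hf0 _) 3))
                  (pow_nonneg (hf0 _) 3),
                ENNReal.ofReal_add (pow_nonneg (hf0 t) 3) (pow_nonneg (hf0 _) 3)]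
    _ = (∫⁻ t : ℝ, ENNReal.ofReal (f t ^ 3)) + (∫⁻ t : ℝ, ENNReal.ofReal (f (t - x) ^ 3))
          + ∫⁻ t : ℝ, ENNReal.ofReal (f (t - y) ^ 3) := by
        rw [lintegral_add_left' (f := fun t => ENNReal.ofReal (f t ^ 3) + ENNReal.ofReal (f (t - x) ^ 3))
          (hA0.add (hA x)), lintegral_add_left' hA0]
    _ = 3 * ∫⁻ t : ℝ, ENNReal.ofReal (f t ^ 3) := by
        rw [lintegral_shift' (fun t => ENNReal.ofReal (f t ^ 3)) x,
          lintegral_shift' (fun t => ENNReal.ofReal (f t ^ 3)) y]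
        ring


lemma bounded_tendsto (g : ℝ → ℝ) (hg : Integrable g) (hg0 : ∀ t, 0 ≤ g t) (M : ℝ)
    (hgM : ∀ t, g t ≤ M) :
    Tendsto (fun p : ℝ × ℝ =>
        ∫⁻ t : ℝ, ENNReal.ofReal (g t * g (t - p.1) * g (t - p.2)))
      (𝓝 (0, 0)) (𝓝 (∫⁻ t : ℝ, ENNReal.ofReal (g t ^ 3))) := by
  have hm : AEMeasurable g (volume : Measure ℝ) := hg.aemeasurable
  have hM : 0 ≤ M := (hg0 0).trans (hgM 0)
  set N : ℝ × ℝ → ℝ≥0∞ :=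
    fun p => ∫⁻ t : ℝ, ENNReal.ofReal (g t * g (t - p.1) * g (t - p.2)) with hN
  set N₀ : ℝ≥0∞ := ∫⁻ t : ℝ, ENNReal.ofReal (g t ^ 3) with hN₀
  set T : ℝ → ℝ≥0∞ := fun x => ∫⁻ t : ℝ, ENNReal.ofReal |g (t - x) - g t| with hT
  set E : ℝ × ℝ → ℝ≥0∞ := fun p => ENNReal.ofReal (M ^ 2) * (T p.1 + T p.2) with hE
  -- measurability bricks
  have hA0 : AEMeasurable (fun t => ENNReal.ofReal (g t ^ 3)) (volume : Measure ℝ) :=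
    ENNReal.measurable_ofReal.comp_aemeasurable (hm.pow_const 3)
  have hProd : ∀ x y : ℝ, AEMeasurable
      (fun t => ENNReal.ofReal (g t * g (t - x) * g (t - y))) (volume : Measure ℝ) :=
    fun x y => ENNReal.measurable_ofReal.comp_aemeasurable
      ((hm.mul (hshift' hm x)).mul (hshift' hm y))
  have hErr : ∀ x : ℝ, AEMeasurable
      (fun t => ENNReal.ofReal (M ^ 2) * ENNReal.ofReal |g (t - x) - g t|)
      (volume : Measure ℝ) := fun x =>
    (((ENNReal.measurable_ofReal.comp measurable_abs).comp_aemeasurable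
      ((hshift' hm x).sub hm)).const_mul _)
  -- the error integral splits
  have hsplit : ∀ x y : ℝ,
      (∫⁻ t : ℝ, (ENNReal.ofReal (M ^ 2) * ENNReal.ofReal |g (t - x) - g t|
        + ENNReal.ofReal (M ^ 2) * ENNReal.ofReal |g (t - y) - g t|)) = E (x, y) := by
    intro x y
    rw [lintegral_add_left' (hErr x),
      lintegral_const_mul' _ _ ENNReal.ofReal_ne_top,
      lintegral_const_mul' _ _ ENNReal.ofReal_ne_top]
    simp only [hE, hT, mul_add]
  -- upper inequality
  have hub : ∀ p : ℝ × ℝ, N p ≤ N₀ + E p := by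
    rintro ⟨x, y⟩
    have hpt : ∀ t : ℝ, ENNReal.ofReal (g t * g (t - x) * g (t - y)) ≤
        ENNReal.ofReal (g t ^ 3) + (ENNReal.ofReal (M ^ 2) * ENNReal.ofReal |g (t - x) - g t|
          + ENNReal.ofReal (M ^ 2) * ENNReal.ofReal |g (t - y) - g t|) := by
      intro t
      have hk := key (g t) (g (t - x)) (g (t - y)) M (hg0 t) (hg0 _) (hgM t) (hgM _)
      have h1 : g t * g (t - x) * g (t - y) ≤
          g t ^ 3 + (M ^ 2 * |g (t - x) - g t| + M ^ 2 * |g (t - y) - g t|) := by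
        have := (abs_le.mp hk).2; linarith
      calc ENNReal.ofReal (g t * g (t - x) * g (t - y)) ≤
          ENNReal.ofReal (g t ^ 3 + (M ^ 2 * |g (t - x) - g t| + M ^ 2 * |g (t - y) - g t|)) :=
            ENNReal.ofReal_le_ofReal h1
        _ ≤ _ := by
            refine le_trans ENNReal.ofReal_add_le (add_le_add_right ?_ _)
            refine le_trans ENNReal.ofReal_add_le ?_
            rw [ENNReal.ofReal_mul (sq_nonneg M), ENNReal.ofReal_mul (sq_nonneg M)]
    calc N (x, y) ≤ ∫⁻ t : ℝ, (ENNReal.ofReal (g t ^ 3)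
          + (ENNReal.ofReal (M ^ 2) * ENNReal.ofReal |g (t - x) - g t|
          + ENNReal.ofReal (M ^ 2) * ENNReal.ofReal |g (t - y) - g t|)) :=
        lintegral_mono fun t => hpt t
      _ = N₀ + E (x, y) := by rw [lintegral_add_left' hA0, hsplit x y]
  -- lower inequality
  have hlb : ∀ p : ℝ × ℝ, N₀ ≤ N p + E p := by
    rintro ⟨x, y⟩
    have hpt : ∀ t : ℝ, ENNReal.ofReal (g t ^ 3) ≤
        ENNReal.ofReal (g t * g (t - x) * g (t - y))
          + (ENNReal.ofReal (M ^ 2) * ENNReal.ofReal |g (t - x) - g t|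
          + ENNReal.ofReal (M ^ 2) * ENNReal.ofReal |g (t - y) - g t|) := by
      intro t
      have hk := key (g t) (g (t - x)) (g (t - y)) M (hg0 t) (hg0 _) (hgM t) (hgM _)
      have h1 : g t ^ 3 ≤ g t * g (t - x) * g (t - y)
          + (M ^ 2 * |g (t - x) - g t| + M ^ 2 * |g (t - y) - g t|) := by
        have := (abs_le.mp hk).1; linarith
      calc ENNReal.ofReal (g t ^ 3) ≤
          ENNReal.ofReal (g t * g (t - x) * g (t - y)
            + (M ^ 2 * |g (t - x) - g t| + M ^ 2 * |g (t - y) - g t|)) :=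
            ENNReal.ofReal_le_ofReal h1
        _ ≤ _ := by
            refine le_trans ENNReal.ofReal_add_le (add_le_add_right ?_ _)
            refine le_trans ENNReal.ofReal_add_le ?_
            rw [ENNReal.ofReal_mul (sq_nonneg M), ENNReal.ofReal_mul (sq_nonneg M)]
    calc N₀ ≤ ∫⁻ t : ℝ, (ENNReal.ofReal (g t * g (t - x) * g (t - y))
          + (ENNReal.ofReal (M ^ 2) * ENNReal.ofReal |g (t - x) - g t|
          + ENNReal.ofReal (M ^ 2) * ENNReal.ofReal |g (t - y) - g t|)) :=
        lintegral_mono fun t => hpt t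
      _ = N (x, y) + E (x, y) := by rw [lintegral_add_left' (hProd x y), hsplit x y]
  -- N₀ is finite
  have hN₀fin : N₀ ≠ ⊤ := by
    have hle : N₀ ≤ ENNReal.ofReal (M ^ 2) * ∫⁻ t : ℝ, ENNReal.ofReal (g t) := by
      rw [← lintegral_const_mul' _ _ ENNReal.ofReal_ne_top]
      refine lintegral_mono fun t => ?_
      rw [← ENNReal.ofReal_mul (by positivity)]
      exact ENNReal.ofReal_le_ofReal (by
        nlinarith [mul_nonneg (mul_nonneg (sub_nonneg.2 (hgM t)) (hg0 t)) (hg0 t),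
          mul_nonneg (mul_nonneg (sub_nonneg.2 (hgM t)) hM) (hg0 t)])
    exact (hle.trans_lt (ENNReal.mul_lt_top ENNReal.ofReal_lt_top hg.lintegral_lt_top)).ne
  -- E tends to 0
  have hEt : Tendsto E (𝓝 ((0:ℝ), (0:ℝ))) (𝓝 0) := by
    have hT0 : Tendsto T (𝓝 0) (𝓝 0) := tendsto_T g hg
    have h1 : Tendsto (fun p : ℝ × ℝ => T p.1 + T p.2) (𝓝 (0, 0)) (𝓝 0) := by
      have := (hT0.comp (continuous_fst.tendsto ((0:ℝ), (0:ℝ)))).add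
        (hT0.comp (continuous_snd.tendsto ((0:ℝ), (0:ℝ))))
      simpa using this
    have := ENNReal.Tendsto.const_mul (a := ENNReal.ofReal (M ^ 2)) h1
      (Or.inr ENNReal.ofReal_ne_top)
    simpa [hE] using this
  -- squeeze
  rw [ENNReal.tendsto_nhds hN₀fin]
  intro ε hε
  filter_upwards [ENNReal.tendsto_nhds_zero.mp hEt ε hε] with p hp
  refine ⟨?_, ?_⟩
  · rw [tsub_le_iff_right]
    exact (hlb p).trans (add_le_add_right hp _)
  · exact (hub p).trans (add_le_add_right hp _)

end KdeckAux

/-- for nonnegative integrable `f` on `ℝ`, with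
`N_f(x,y) = ∫ f(t) f(t−x) f(t−y) dt ∈ [0,∞]`, one has `N_f(x,y) ≤ ∫ f³`,
`liminf_{(x,y)→(0,0)} N_f(x,y) ≥ ∫ f³`, and hence
`N_f(x,y) → ∫ f³` as `(x,y) → (0,0)` (both sides possibly `+∞`). -/
theorem kdeck_continuous_at_zero (f : ℝ → ℝ) (hf : Integrable f)
    (hf0 : ∀ t, 0 ≤ f t) :
    (∀ x y : ℝ,
      (∫⁻ t : ℝ, ENNReal.ofReal (f t * f (t - x) * f (t - y))) ≤
        ∫⁻ t : ℝ, ENNReal.ofReal (f t ^ 3)) ∧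
    (∫⁻ t : ℝ, ENNReal.ofReal (f t ^ 3)) ≤
      liminf (fun p : ℝ × ℝ =>
        ∫⁻ t : ℝ, ENNReal.ofReal (f t * f (t - p.1) * f (t - p.2)))
        (𝓝 (0, 0)) ∧
    Tendsto (fun p : ℝ × ℝ =>
        ∫⁻ t : ℝ, ENNReal.ofReal (f t * f (t - p.1) * f (t - p.2)))
      (𝓝 (0, 0)) (𝓝 (∫⁻ t : ℝ, ENNReal.ofReal (f t ^ 3))) := by
  have hm : AEMeasurable f (volume : Measure ℝ) := hf.aemeasurable
  have part1 : ∀ x y : ℝ,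
      (∫⁻ t : ℝ, ENNReal.ofReal (f t * f (t - x) * f (t - y))) ≤
        ∫⁻ t : ℝ, ENNReal.ofReal (f t ^ 3) := fun x y => KdeckAux.upper f hf0 hm x y
  set g : ℕ → ℝ → ℝ := fun n t => min (f t) n with hgdef
  have hg0 : ∀ n t, 0 ≤ g n t := fun n t => le_min (hf0 t) (Nat.cast_nonneg n)
  have hgM : ∀ n t, g n t ≤ (n : ℝ) := fun n t => min_le_right _ _
  have hgles : ∀ n t, g n t ≤ f t := fun n t => min_le_left _ _
  have hgint : ∀ n, Integrable (g n) := by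
    intro n
    refine ⟨(hm.min aemeasurable_const).aestronglyMeasurable, ?_⟩
    refine hf.2.mono (Filter.Eventually.of_forall fun t => ?_)
    rw [Real.norm_eq_abs, Real.norm_eq_abs, abs_of_nonneg (hg0 n t), abs_of_nonneg (hf0 t)]
    exact hgles n t
  have htend : ∀ n : ℕ, Tendsto (fun p : ℝ × ℝ =>
      ∫⁻ t : ℝ, ENNReal.ofReal (g n t * g n (t - p.1) * g n (t - p.2)))
      (𝓝 (0, 0)) (𝓝 (∫⁻ t : ℝ, ENNReal.ofReal (g n t ^ 3))) :=
    fun n => KdeckAux.bounded_tendsto (g n) (hgint n) (hg0 n) n (hgM n)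
  have hmono : ∀ (n : ℕ) (p : ℝ × ℝ),
      (∫⁻ t : ℝ, ENNReal.ofReal (g n t * g n (t - p.1) * g n (t - p.2))) ≤
        ∫⁻ t : ℝ, ENNReal.ofReal (f t * f (t - p.1) * f (t - p.2)) := by
    intro n p
    refine lintegral_mono fun t => ENNReal.ofReal_le_ofReal ?_
    exact mul_le_mul (mul_le_mul (hgles n t) (hgles n _) (hg0 n _) (hf0 t)) (hgles n _)
      (hg0 n _) (mul_nonneg (hf0 t) (hf0 _))
  have hliminf : ∀ n : ℕ, (∫⁻ t : ℝ, ENNReal.ofReal (g n t ^ 3)) ≤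
      liminf (fun p : ℝ × ℝ =>
        ∫⁻ t : ℝ, ENNReal.ofReal (f t * f (t - p.1) * f (t - p.2))) (𝓝 (0, 0)) := by
    intro n
    rw [← (htend n).liminf_eq]
    exact liminf_le_liminf (Filter.Eventually.of_forall (hmono n))
  have hsup : (∫⁻ t : ℝ, ENNReal.ofReal (f t ^ 3)) =
      ⨆ n : ℕ, ∫⁻ t : ℝ, ENNReal.ofReal (g n t ^ 3) := by
    have hswap := lintegral_iSup' (μ := (volume : Measure ℝ))
      (f := fun n t => ENNReal.ofReal (g n t ^ 3))
      (fun n => ENNReal.measurable_ofReal.comp_aemeasurable ((hgint n).aemeasurable.pow_const 3))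
      (Filter.Eventually.of_forall fun t n m hnm =>
        ENNReal.ofReal_le_ofReal (pow_le_pow_left₀ (hg0 n t)
          (min_le_min le_rfl (Nat.cast_le.2 hnm)) 3))
    rw [← hswap]
    congr 1
    ext t
    refine le_antisymm ?_ (iSup_le fun n =>
      ENNReal.ofReal_le_ofReal (pow_le_pow_left₀ (hg0 n t) (hgles n t) 3))
    refine le_iSup_of_le ⌈f t⌉₊ ?_
    have h : g ⌈f t⌉₊ t = f t := min_eq_left (Nat.le_ceil (f t))
    simp only [h, le_refl]
  have part2 : (∫⁻ t : ℝ, ENNReal.ofReal (f t ^ 3)) ≤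
      liminf (fun p : ℝ × ℝ =>
        ∫⁻ t : ℝ, ENNReal.ofReal (f t * f (t - p.1) * f (t - p.2))) (𝓝 (0, 0)) := by
    rw [hsup]
    exact iSup_le hliminf
  refine ⟨part1, part2, ?_⟩
  refine tendsto_of_le_liminf_of_limsup_le part2 ?_
  exact limsup_le_of_le (by isBoundedDefault)
    (Filter.Eventually.of_forall fun p => part1 p.1 p.2)
end
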